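/- arXiv:1410.6323 — 3 statements merged into one kernel-verified Lean document; each statement's English description precedes it below -/
import Mathlib

section
/- The effective coefficients are linear, symmetric and elliptic. Assume A = (a_{ij}) satisfies (L1), (L2) and (L3), and for each M ∈ S^n let γ(M) ∈ ℝ be the unique constant such that a_{ij}(y) D_{ij}w + a_{ij}(y) M_{ij} = γ(M) in ℝⁿ admits a bounded ℤⁿ-periodic C² solution. Then: (i) γ is linear on S^n, i.e. there is a constant matrix (ā_{ij}) with γ(M) = ā_{ij} M_{ij} for all M ∈ S^n; (ii) the matrix (ā_{ij}) is symmetric and elliptic with the same ellipticity constants as (a_{ij}): λ|ξ|² ≤ ā_{ij} ξ_i ξ_j ≤ Λ|ξ|² for all ξ ∈ ℝⁿ. -/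
open scoped Matrix.Norms.L2Operator
open Set

noncomputable section

/-- Points of `ℝⁿ` (with the Euclidean norm). -/
abbrev En (n : ℕ) := EuclideanSpace ℝ (Fin n)

/-- Translation of a point of `ℝⁿ` by an integer vector `k ∈ ℤⁿ`. -/
def latticeShift {n : ℕ} (y : En n) (k : Fin n → ℤ) : En n :=
  y + (WithLp.equiv 2 (Fin n → ℝ)).symm (fun i => (k i : ℝ))

/-- `ℤⁿ`-periodicity of a scalar function on `ℝⁿ`. -/
def ZPeriodic {n : ℕ} (w : En n → ℝ) : Prop :=
  ∀ (y : En n) (k : Fin n → ℤ), w (latticeShift y k) = w y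

/-- First partial derivative `D_i u (y)`. -/
def pd1 {n : ℕ} (u : En n → ℝ) (i : Fin n) (y : En n) : ℝ :=
  fderiv ℝ u y (EuclideanSpace.single i 1)

/-- Second partial derivative `D_{ij} u (y)`. -/
def pd2 {n : ℕ} (u : En n → ℝ) (i j : Fin n) (y : En n) : ℝ :=
  iteratedFDeriv ℝ 2 u y ![EuclideanSpace.single i 1, EuclideanSpace.single j 1]

/-- Symmetry of the coefficient matrix `A(y) = (a_{ij}(y))`. -/
def CoeffSymm {n : ℕ} (A : En n → Matrix (Fin n) (Fin n) ℝ) : Prop :=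
  ∀ y : En n, (A y).IsSymm

/-- (L1) `ℤⁿ`-periodicity of the coefficients. -/
def CoeffPeriodic {n : ℕ} (A : En n → Matrix (Fin n) (Fin n) ℝ) : Prop :=
  ∀ (y : En n) (k : Fin n → ℤ), A (latticeShift y k) = A y

/-- (L2) uniform ellipticity: `λ|ξ|² ≤ a_{ij}(y) ξ_i ξ_j ≤ Λ|ξ|²`. -/
def CoeffElliptic {n : ℕ} (lam Lam : ℝ) (A : En n → Matrix (Fin n) (Fin n) ℝ) : Prop :=
  ∀ (y ξ : En n),
    lam * ‖ξ‖ ^ 2 ≤ ∑ i, ∑ j, A y i j * ξ i * ξ j ∧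
      ∑ i, ∑ j, A y i j * ξ i * ξ j ≤ Lam * ‖ξ‖ ^ 2

/-- (L3) each entry of `A` is bounded by `σ` and `α`-Hölder continuous with constant `σ`,
i.e. `‖A‖_{C^{0,α}(ℝⁿ)} ≤ σ`. -/
def CoeffHolder {n : ℕ} (α σ : ℝ) (A : En n → Matrix (Fin n) (Fin n) ℝ) : Prop :=
  ∀ i j : Fin n, (∀ y : En n, |A y i j| ≤ σ) ∧
    ∀ y z : En n, |A y i j - A z i j| ≤ σ * ‖y - z‖ ^ α

/-- Boundedness of a scalar function on `ℝⁿ`. -/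
def IsBoundedFn {n : ℕ} (w : En n → ℝ) : Prop := ∃ K : ℝ, ∀ y : En n, |w y| ≤ K

/-- `‖w‖_{C^{2,α}(ℝⁿ)} ≤ C`: `w` is `C²`, `w`, `Dw`, `D²w` are bounded by `C` and `D²w` is
`α`-Hölder continuous with constant `C`. -/
def C2HolderBound {n : ℕ} (α C : ℝ) (w : En n → ℝ) : Prop :=
  ContDiff ℝ 2 w ∧ (∀ y : En n, |w y| ≤ C) ∧ (∀ y : En n, ‖fderiv ℝ w y‖ ≤ C) ∧
    (∀ y : En n, ‖iteratedFDeriv ℝ 2 w y‖ ≤ C) ∧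
    ∀ y z : En n, ‖iteratedFDeriv ℝ 2 w y - iteratedFDeriv ℝ 2 w z‖ ≤ C * ‖y - z‖ ^ α

/-- Membership in `C^{2,α}(ℝⁿ)`. -/
def MemC2Holder {n : ℕ} (α : ℝ) (w : En n → ℝ) : Prop := ∃ C : ℝ, C2HolderBound α C w

/-- `w` is a bounded `ℤⁿ`-periodic `C²` solution of the cell problem
`a_{ij}(y) D_{ij} w + a_{ij}(y) M_{ij} = γ` in `ℝⁿ`. -/
def CellSol {n : ℕ} (A : En n → Matrix (Fin n) (Fin n) ℝ) (M : Matrix (Fin n) (Fin n) ℝ)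
    (γ : ℝ) (w : En n → ℝ) : Prop :=
  IsBoundedFn w ∧ ZPeriodic w ∧ ContDiff ℝ 2 w ∧
    ∀ y : En n, (∑ i, ∑ j, A y i j * pd2 w i j y) + (∑ i, ∑ j, A y i j * M i j) = γ

/-! ### Auxiliary lemmas -/

private lemma psd_trace_nonneg' {m : Type*} [Fintype m] [DecidableEq m]
    {M : Matrix m m ℝ} (hM : M.PosSemidef) : 0 ≤ M.trace := by
  rw [Matrix.trace]
  apply Finset.sum_nonneg
  intro i _
  have := hM.dotProduct_mulVec_nonneg (Pi.single i 1)
  simpa [dotProduct, Matrix.mulVec, Pi.single_apply] using this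

private lemma dot_eq_double_sum' {m : Type*} [Fintype m] (M : Matrix m m ℝ) (x : m → ℝ) :
    dotProduct (star x) (M.mulVec x) = ∑ i, ∑ j, M i j * x i * x j := by
  simp only [dotProduct, Matrix.mulVec, star_trivial, Finset.mul_sum]
  exact Finset.sum_congr rfl fun i _ => Finset.sum_congr rfl fun j _ => by ring

private lemma euclid_symm_sum' {n : ℕ} (x : Fin n → ℝ) :
    (WithLp.equiv 2 (Fin n → ℝ)).symm x = ∑ i, x i • EuclideanSpace.single i 1 := by
  ext j
  rw [WithLp.equiv_symm_apply, PiLp.toLp_apply]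
  have : (∑ i, x i • EuclideanSpace.single i (1:ℝ)) j
      = ∑ i, (x i • EuclideanSpace.single i (1:ℝ)) j :=
    by rw [WithLp.ofLp_sum]; exact Finset.sum_apply j Finset.univ _
  rw [this]
  simp [EuclideanSpace.single_apply, Finset.sum_ite_eq, mul_comm]

private lemma trace_quad_nonpos' {n : ℕ} (a : Matrix (Fin n) (Fin n) ℝ) (ha : a.IsSymm)
    (hpos : ∀ x : Fin n → ℝ, 0 ≤ ∑ i, ∑ j, a i j * x i * x j)
    (B : En n →L[ℝ] En n →L[ℝ] ℝ)
    (hB : ∀ v : En n, B v v ≤ 0) :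
    ∑ i, ∑ j, a i j * B (EuclideanSpace.single i 1) (EuclideanSpace.single j 1) ≤ 0 := by
  classical
  set H : Matrix (Fin n) (Fin n) ℝ :=
    Matrix.of (fun i j => B (EuclideanSpace.single i 1) (EuclideanSpace.single j 1)) with hHdef
  have key : ∀ x : Fin n → ℝ,
      ∑ i, ∑ j, H i j * x i * x j = B ((WithLp.equiv 2 (Fin n → ℝ)).symm x)
        ((WithLp.equiv 2 (Fin n → ℝ)).symm x) := by
    intro x
    rw [euclid_symm_sum' x]
    simp only [map_sum, map_smul, ContinuousLinearMap.sum_apply, ContinuousLinearMap.smul_apply,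
      smul_eq_mul, Finset.mul_sum]
    rw [Finset.sum_comm]
    refine Finset.sum_congr rfl fun i _ => Finset.sum_congr rfl fun j _ => ?_
    simp only [hHdef, Matrix.of_apply]
    ring
  have pa : a.PosSemidef := by
    refine Matrix.PosSemidef.of_dotProduct_mulVec_nonneg ?_ fun x => ?_
    · rw [Matrix.IsHermitian, Matrix.conjTranspose_eq_transpose_of_trivial, ha]
    · rw [dot_eq_double_sum']; exact hpos x
  set N : Matrix (Fin n) (Fin n) ℝ := (-(2:ℝ)⁻¹) • (H + H.transpose) with hNdef
  have hswap : ∀ x : Fin n → ℝ, ∑ i, ∑ j, H j i * x i * x j = ∑ i, ∑ j, H i j * x i * x j := by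
    intro x
    rw [Finset.sum_comm]
    exact Finset.sum_congr rfl fun i _ => Finset.sum_congr rfl fun j _ => by ring
  have pn : N.PosSemidef := by
    refine Matrix.PosSemidef.of_dotProduct_mulVec_nonneg ?_ fun x => ?_
    · rw [Matrix.IsHermitian, Matrix.conjTranspose_eq_transpose_of_trivial, hNdef,
        Matrix.transpose_smul, Matrix.transpose_add, Matrix.transpose_transpose, add_comm]
    · rw [dot_eq_double_sum']
      have expand : ∀ i j, N i j * x i * x j
          = -(2:ℝ)⁻¹ * (H i j * x i * x j) + -(2:ℝ)⁻¹ * (H j i * x i * x j) := by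
        intro i j
        simp only [hNdef, Matrix.smul_apply, Matrix.add_apply, Matrix.transpose_apply,
          smul_eq_mul]
        ring
      calc (0:ℝ) ≤ -(∑ i, ∑ j, H i j * x i * x j) := by
              have := key x; have := hB ((WithLp.equiv 2 (Fin n → ℝ)).symm x); linarith
        _ = ∑ i, ∑ j, N i j * x i * x j := by
              simp only [expand, Finset.sum_add_distrib, ← Finset.mul_sum, hswap x]
              ring
  have htr : ∑ i, ∑ j, a i j * H i j = -(a * N).trace := by
    rw [Matrix.trace]
    simp only [Matrix.diag_apply, Matrix.mul_apply]
    have expand : ∀ i j, a i j * N j i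
        = -(2:ℝ)⁻¹ * (a i j * H j i) + -(2:ℝ)⁻¹ * (a i j * H i j) := by
      intro i j
      simp only [hNdef, Matrix.smul_apply, Matrix.add_apply, Matrix.transpose_apply, smul_eq_mul]
      ring
    have haswap : ∑ i, ∑ j, a i j * H j i = ∑ i, ∑ j, a i j * H i j := by
      rw [Finset.sum_comm]
      refine Finset.sum_congr rfl fun i _ => Finset.sum_congr rfl fun j _ => ?_
      rw [ha.apply i j]
    simp only [expand, Finset.sum_add_distrib, ← Finset.mul_sum, haswap]
    ring
  rw [show ∑ i, ∑ j, a i j * B (EuclideanSpace.single i 1) (EuclideanSpace.single j 1)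
      = ∑ i, ∑ j, a i j * H i j from rfl, htr, neg_nonpos]
  have h2 : (Matrix.hadamard a N.transpose).PosSemidef :=
    pa.hadamard (Matrix.posSemidef_transpose_iff.mpr pn)
  have h3 := h2.dotProduct_mulVec_nonneg (fun _ => 1)
  have h4 : (a * N).trace = dotProduct (star (fun _ : Fin n => (1:ℝ)))
      ((Matrix.hadamard a N.transpose).mulVec (fun _ => 1)) := by
    simp [Matrix.trace, Matrix.mul_apply, dotProduct, Matrix.mulVec, Matrix.hadamard_apply]
  rw [h4]
  exact h3

private lemma second_deriv_nonpos_at_max' {n : ℕ} {u : En n → ℝ} (hu : ContDiff ℝ 2 u)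
    {y₀ : En n} (hmax : ∀ y, u y ≤ u y₀) (v : En n) :
    fderiv ℝ (fderiv ℝ u) y₀ v v ≤ 0 := by
  by_contra hcon
  push_neg at hcon
  set c : ℝ := fderiv ℝ (fderiv ℝ u) y₀ v v with hcdef
  have hline : ∀ t : ℝ, HasDerivAt (fun s : ℝ => y₀ + s • v) v t := by
    intro t
    simpa using ((hasDerivAt_id t).smul_const v).const_add y₀
  have hudiff : Differentiable ℝ u := hu.differentiable (by norm_num)
  set g' : ℝ → ℝ := fun t => fderiv ℝ u (y₀ + t • v) v with hg'def
  have hgd : ∀ t : ℝ, HasDerivAt (fun s : ℝ => u (y₀ + s • v)) (g' t) t := by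
    intro t
    exact ((hudiff (y₀ + t • v)).hasFDerivAt).comp_hasDerivAt t (hline t)
  have hfd1 : ContDiff ℝ 1 (fderiv ℝ u) := hu.fderiv_right (le_refl 2)
  have hD : HasFDerivAt (fderiv ℝ u) (fderiv ℝ (fderiv ℝ u) y₀) y₀ :=
    ((hfd1.differentiable one_ne_zero) y₀).hasFDerivAt
  have hEv : HasFDerivAt (fun y => fderiv ℝ u y v)
      ((ContinuousLinearMap.apply ℝ ℝ v).comp (fderiv ℝ (fderiv ℝ u) y₀)) y₀ :=
    (ContinuousLinearMap.apply ℝ ℝ v).hasFDerivAt.comp y₀ hD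
  have hg'd : HasDerivAt g' c 0 := by
    have h00 : y₀ + (0:ℝ) • v = y₀ := by simp
    rw [← h00] at hEv
    have := hEv.comp_hasDerivAt 0 (hline 0)
    convert this using 1
    · rfl
    · rfl
    · rfl
    · simp [hcdef]
  have hfz : fderiv ℝ u y₀ = 0 := by
    have : IsLocalMax u y₀ := Filter.Eventually.of_forall hmax
    exact this.fderiv_eq_zero
  have hg'0 : g' 0 = 0 := by simp [hg'def, hfz]
  have hslope : Filter.Tendsto (slope g' 0) (nhdsWithin 0 {(0:ℝ)}ᶜ) (nhds c) :=
    hasDerivAt_iff_tendsto_slope.mp hg'd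
  have hev : ∀ᶠ t in nhdsWithin 0 {(0:ℝ)}ᶜ, 0 < slope g' 0 t :=
    hslope.eventually (eventually_gt_nhds hcon)
  have hev' : ∀ᶠ t in nhdsWithin (0:ℝ) (Set.Ioi 0), 0 < g' t := by
    have h2 : ∀ᶠ t in nhdsWithin (0:ℝ) (Set.Ioi 0), 0 < slope g' 0 t :=
      hev.filter_mono (nhdsWithin_mono 0 (fun t ht => by
        simp only [Set.mem_compl_iff, Set.mem_singleton_iff]
        exact ne_of_gt ht))
    have h3 : ∀ᶠ t in nhdsWithin (0:ℝ) (Set.Ioi 0), (0:ℝ) < t :=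
      eventually_nhdsWithin_of_forall (fun t ht => ht)
    filter_upwards [h2, h3] with t hst ht
    have heq : slope g' 0 t = g' t / t := by
      simp [slope, hg'0, div_eq_inv_mul]
    rw [heq] at hst
    have := mul_pos hst ht
    rwa [div_mul_cancel₀ _ (ne_of_gt ht)] at this
  rw [Filter.eventually_iff, Metric.mem_nhdsWithin_iff] at hev'
  obtain ⟨ε, hε, hball⟩ := hev'
  set e := ε / 2 with hedef
  have he : 0 < e := by positivity
  have hmono : StrictMonoOn (fun s : ℝ => u (y₀ + s • v)) (Set.Icc 0 e) := by
    apply strictMonoOn_of_deriv_pos (convex_Icc 0 e)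
    · exact ((hu.continuous).comp (by continuity)).continuousOn
    · intro t ht
      rw [interior_Icc] at ht
      rw [(hgd t).deriv]
      refine hball ⟨?_, ht.1⟩
      rw [Metric.mem_ball, Real.dist_eq, sub_zero, abs_of_pos ht.1]
      calc t < e := ht.2
      _ < ε := by rw [hedef]; linarith
  have h1 : u (y₀ + (0:ℝ) • v) < u (y₀ + e • v) :=
    hmono (Set.left_mem_Icc.mpr he.le) (Set.right_mem_Icc.mpr he.le) he
  simp only [zero_smul, add_zero] at h1
  exact absurd (hmax (y₀ + e • v)) (not_le.mpr h1)

private lemma exists_global_max' {n : ℕ} {u : En n → ℝ}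
    (hc : Continuous u) (hper : ZPeriodic u) : ∃ y₀ : En n, ∀ y, u y ≤ u y₀ := by
  classical
  obtain ⟨y₀, hy₀mem, hy₀⟩ :=
    (isCompact_closedBall (0 : En n) n).exists_isMaxOn
      ⟨0, Metric.mem_closedBall_self (by positivity)⟩ hc.continuousOn
  refine ⟨y₀, fun y => ?_⟩
  set k : Fin n → ℤ := fun i => -⌊y i⌋ with hk
  have hval : u y = u (latticeShift y k) := (hper y k).symm
  have hmem : latticeShift y k ∈ Metric.closedBall (0 : En n) n := by
    rw [Metric.mem_closedBall, dist_zero_right]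
    have hcoord : ∀ i, latticeShift y k i = Int.fract (y i) := by
      intro i
      have h1 : latticeShift y k i = y i + ((k i : ℤ) : ℝ) := by
        simp [latticeShift, WithLp.equiv_symm_apply, PiLp.toLp_apply, PiLp.add_apply]
      rw [h1, hk, Int.fract]
      push_cast
      ring
    have hnorm : ‖latticeShift y k‖ = Real.sqrt (∑ i, ‖latticeShift y k i‖ ^ 2) :=
      EuclideanSpace.norm_eq _
    rw [hnorm]
    have hle : (∑ i, ‖latticeShift y k i‖ ^ 2) ≤ (n : ℝ) := by
      calc (∑ i, ‖latticeShift y k i‖ ^ 2) ≤ ∑ _i : Fin n, (1:ℝ) := by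
            apply Finset.sum_le_sum
            intro i _
            rw [hcoord i]
            have h1 : |Int.fract (y i)| ≤ 1 := by
              rw [abs_of_nonneg (Int.fract_nonneg _)]
              exact (Int.fract_lt_one _).le
            calc ‖Int.fract (y i)‖ ^ 2 = |Int.fract (y i)| ^ 2 := by rw [Real.norm_eq_abs]
              _ ≤ 1 ^ 2 := pow_le_pow_left₀ (abs_nonneg _) h1 2
              _ = 1 := one_pow 2
        _ = (n : ℝ) := by simp
    calc Real.sqrt (∑ i, ‖latticeShift y k i‖ ^ 2) ≤ Real.sqrt ((n:ℝ)) :=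
          Real.sqrt_le_sqrt hle
      _ ≤ Real.sqrt ((n:ℝ)^2) := by
          apply Real.sqrt_le_sqrt
          exact_mod_cast Nat.le_self_pow two_ne_zero n
      _ = (n : ℝ) := Real.sqrt_sq (Nat.cast_nonneg n)
  rw [hval]
  exact hy₀ hmem

/-- At a global maximum of a periodic `C²` function, the elliptic operator is nonpositive. -/
private lemma exists_max_with_ineq {n : ℕ} {lam Lam : ℝ} (hlam : 0 < lam)
    {A : En n → Matrix (Fin n) (Fin n) ℝ}
    (hAsymm : CoeffSymm A) (hAell : CoeffElliptic lam Lam A)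
    {u : En n → ℝ} (hu : ContDiff ℝ 2 u) (hper : ZPeriodic u) :
    ∃ y₀ : En n, (∀ y, u y ≤ u y₀) ∧ ∑ i, ∑ j, A y₀ i j * pd2 u i j y₀ ≤ 0 := by
  obtain ⟨y₀, hy₀⟩ := exists_global_max' hu.continuous hper
  refine ⟨y₀, hy₀, ?_⟩
  have hB : ∀ v : En n, fderiv ℝ (fderiv ℝ u) y₀ v v ≤ 0 :=
    second_deriv_nonpos_at_max' hu hy₀
  have hpos : ∀ x : Fin n → ℝ, 0 ≤ ∑ i, ∑ j, A y₀ i j * x i * x j := by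
    intro x
    set ξ : En n := (WithLp.equiv 2 (Fin n → ℝ)).symm x with hξ
    have h1 := (hAell y₀ ξ).1
    have h2 : (0:ℝ) ≤ lam * ‖ξ‖ ^ 2 := by positivity
    have h3 : ∀ i, ξ i = x i := fun i => rfl
    calc (0:ℝ) ≤ ∑ i, ∑ j, A y₀ i j * ξ i * ξ j := le_trans h2 h1
      _ = ∑ i, ∑ j, A y₀ i j * x i * x j := by
          exact Finset.sum_congr rfl fun i _ => Finset.sum_congr rfl fun j _ => by rw [h3, h3]
  have := trace_quad_nonpos' (A y₀) (hAsymm y₀) hpos (fderiv ℝ (fderiv ℝ u) y₀) hB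
  calc ∑ i, ∑ j, A y₀ i j * pd2 u i j y₀
      = ∑ i, ∑ j, A y₀ i j * fderiv ℝ (fderiv ℝ u) y₀ (EuclideanSpace.single i 1)
          (EuclideanSpace.single j 1) := by
        refine Finset.sum_congr rfl fun i _ => Finset.sum_congr rfl fun j _ => ?_
        rw [pd2, iteratedFDeriv_two_apply]
        simp
    _ ≤ 0 := this

/-- Uniqueness of the effective constant. -/
private lemma cellSol_unique' {n : ℕ} {lam Lam : ℝ} (hlam : 0 < lam)
    {A : En n → Matrix (Fin n) (Fin n) ℝ}
    (hAsymm : CoeffSymm A) (hAell : CoeffElliptic lam Lam A)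
    {M : Matrix (Fin n) (Fin n) ℝ} {γ₁ γ₂ : ℝ} {w₁ w₂ : En n → ℝ}
    (h₁ : CellSol A M γ₁ w₁) (h₂ : CellSol A M γ₂ w₂) : γ₁ = γ₂ := by
  have key : ∀ (δ₁ δ₂ : ℝ) (v₁ v₂ : En n → ℝ),
      CellSol A M δ₁ v₁ → CellSol A M δ₂ v₂ → δ₁ ≤ δ₂ := by
    intro δ₁ δ₂ v₁ v₂ k₁ k₂
    by_contra hcon
    push_neg at hcon
    set u : En n → ℝ := fun y => v₁ y - v₂ y with hu
    have huc : ContDiff ℝ 2 u := k₁.2.2.1.sub k₂.2.2.1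
    have huper : ZPeriodic u := by
      intro y k
      simp only [hu]
      rw [k₁.2.1 y k, k₂.2.1 y k]
    obtain ⟨y₀, _, hineq⟩ := exists_max_with_ineq hlam hAsymm hAell huc huper
    have hsplit : ∀ i j, pd2 u i j y₀ = pd2 v₁ i j y₀ - pd2 v₂ i j y₀ := by
      intro i j
      rw [pd2, pd2, pd2]
      have : iteratedFDeriv ℝ 2 u y₀ = iteratedFDeriv ℝ 2 v₁ y₀ - iteratedFDeriv ℝ 2 v₂ y₀ := by
        have hc2 : ContDiff ℝ ((2:ℕ):ℕ∞) v₁ := by exact_mod_cast k₁.2.2.1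
        have hc3 : ContDiff ℝ ((2:ℕ):ℕ∞) (-v₂) := by exact_mod_cast k₂.2.2.1.neg
        have h4 := iteratedFDeriv_add_apply (i := 2) (x := y₀) hc2.contDiffAt hc3.contDiffAt
        have h5 : u = v₁ + (-v₂) := by funext y; simp [hu, sub_eq_add_neg]
        rw [h5, h4, iteratedFDeriv_neg_apply, sub_eq_add_neg]
      rw [this]
      simp
    have e₁ := k₁.2.2.2 y₀
    have e₂ := k₂.2.2.2 y₀
    have hsum : ∑ i, ∑ j, A y₀ i j * pd2 u i j y₀
        = (∑ i, ∑ j, A y₀ i j * pd2 v₁ i j y₀) - ∑ i, ∑ j, A y₀ i j * pd2 v₂ i j y₀ := by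
      rw [← Finset.sum_sub_distrib]
      refine Finset.sum_congr rfl fun i _ => ?_
      rw [← Finset.sum_sub_distrib]
      refine Finset.sum_congr rfl fun j _ => ?_
      rw [hsplit]
      ring
    rw [hsum] at hineq
    linarith
  exact le_antisymm (key _ _ _ _ h₁ h₂) (key _ _ _ _ h₂ h₁)
private lemma cellSol_smul'' {n : ℕ} {A : En n → Matrix (Fin n) (Fin n) ℝ}
    {M : Matrix (Fin n) (Fin n) ℝ} {δ : ℝ} {w : En n → ℝ}
    (h : CellSol A M δ w) (c : ℝ) :
    CellSol A (c • M) (c * δ) (fun y => c * w y) := by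
  obtain ⟨⟨K, hK⟩, hper, hc2, heq⟩ := h
  have hcs : ContDiff ℝ ((2:ℕ):ℕ∞) w := by exact_mod_cast hc2
  have hpd : ∀ (i j : Fin n) (y : En n),
      pd2 (fun y => c * w y) i j y = c * pd2 w i j y := by
    intro i j y
    rw [pd2, pd2]
    have h2 : (fun y => c * w y) = c • w := by funext z; simp
    have h1 : iteratedFDeriv ℝ 2 (c • w) y = c • iteratedFDeriv ℝ 2 w y :=
      iteratedFDeriv_const_smul_apply hcs.contDiffAt
    rw [h2, h1]
    simp
  refine ⟨⟨|c| * K, fun y => by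
      rw [show |c * w y| = |c| * |w y| from abs_mul c (w y)]
      exact mul_le_mul_of_nonneg_left (hK y) (abs_nonneg c)⟩,
    fun y k => by simp only []; rw [hper y k],
    contDiff_const.mul hc2, fun y => ?_⟩
  have e1 : ∑ i, ∑ j, A y i j * pd2 (fun y => c * w y) i j y
      = c * ∑ i, ∑ j, A y i j * pd2 w i j y := by
    rw [Finset.mul_sum]
    refine Finset.sum_congr rfl fun i _ => ?_
    rw [Finset.mul_sum]
    refine Finset.sum_congr rfl fun j _ => ?_
    rw [hpd]; ring
  have e2 : ∑ i, ∑ j, A y i j * (c • M) i j = c * ∑ i, ∑ j, A y i j * M i j := by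
    rw [Finset.mul_sum]
    refine Finset.sum_congr rfl fun i _ => ?_
    rw [Finset.mul_sum]
    refine Finset.sum_congr rfl fun j _ => ?_
    rw [Matrix.smul_apply, smul_eq_mul]; ring
  rw [e1, e2, ← mul_add, heq y]

private lemma cellSol_add'' {n : ℕ} {A : En n → Matrix (Fin n) (Fin n) ℝ}
    {M N : Matrix (Fin n) (Fin n) ℝ} {δ₁ δ₂ : ℝ} {w₁ w₂ : En n → ℝ}
    (h₁ : CellSol A M δ₁ w₁) (h₂ : CellSol A N δ₂ w₂) :
    CellSol A (M + N) (δ₁ + δ₂) (fun y => w₁ y + w₂ y) := by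
  obtain ⟨⟨K₁, hK₁⟩, hper₁, hc₁, heq₁⟩ := h₁
  obtain ⟨⟨K₂, hK₂⟩, hper₂, hc₂, heq₂⟩ := h₂
  have hpd : ∀ (i j : Fin n) (y : En n),
      pd2 (fun y => w₁ y + w₂ y) i j y = pd2 w₁ i j y + pd2 w₂ i j y := by
    intro i j y
    rw [pd2, pd2, pd2]
    have hcs₁ : ContDiff ℝ ((2:ℕ):ℕ∞) w₁ := by exact_mod_cast hc₁
    have hcs₂ : ContDiff ℝ ((2:ℕ):ℕ∞) w₂ := by exact_mod_cast hc₂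
    have h1 := iteratedFDeriv_add_apply (i := 2) (x := y) hcs₁.contDiffAt hcs₂.contDiffAt
    have h2 : (fun y => w₁ y + w₂ y) = w₁ + w₂ := rfl
    rw [h2, h1]
    simp
  refine ⟨⟨K₁ + K₂, fun y => (abs_add_le _ _).trans (add_le_add (hK₁ y) (hK₂ y))⟩,
    fun y k => by simp only []; rw [hper₁ y k, hper₂ y k],
    hc₁.add hc₂, fun y => ?_⟩
  have e1 : ∑ i, ∑ j, A y i j * pd2 (fun y => w₁ y + w₂ y) i j y
      = (∑ i, ∑ j, A y i j * pd2 w₁ i j y) + ∑ i, ∑ j, A y i j * pd2 w₂ i j y := by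
    rw [← Finset.sum_add_distrib]
    refine Finset.sum_congr rfl fun i _ => ?_
    rw [← Finset.sum_add_distrib]
    refine Finset.sum_congr rfl fun j _ => ?_
    rw [hpd]; ring
  have e2 : ∑ i, ∑ j, A y i j * (M + N) i j
      = (∑ i, ∑ j, A y i j * M i j) + ∑ i, ∑ j, A y i j * N i j := by
    rw [← Finset.sum_add_distrib]
    refine Finset.sum_congr rfl fun i _ => ?_
    rw [← Finset.sum_add_distrib]
    refine Finset.sum_congr rfl fun j _ => ?_
    rw [Matrix.add_apply]; ring
  rw [e1, e2]
  have := heq₁ y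
  have := heq₂ y
  linarith

/-- pd2 of a negated function. -/
private lemma pd2_neg'' {n : ℕ} (w : En n → ℝ) (i j : Fin n) (y : En n) :
    pd2 (fun y => -(w y)) i j y = -(pd2 w i j y) := by
  rw [pd2, pd2]
  have h2 : (fun y => -(w y)) = -w := rfl
  rw [h2, iteratedFDeriv_neg_apply]
  simp
/-- **The effective coefficients are linear, symmetric and elliptic.** If `γ(M)` denotes the
unique constant for which the cell problem with datum `M ∈ Sⁿ` is solvable, then
`γ(M) = ā_{ij} M_{ij}` for a constant symmetric matrix `(ā_{ij})` which is elliptic with the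
same constants `λ, Λ`. -/
theorem effective_coefficients_linear_symmetric_elliptic
    (n : ℕ) (hn : 1 ≤ n) (lam Lam σ α : ℝ)
    (hlam : 0 < lam) (hlamLam : lam ≤ Lam) (hσ : 0 < σ) (hα : α ∈ Set.Ioc (0:ℝ) 1)
    (A : En n → Matrix (Fin n) (Fin n) ℝ)
    (hAsymm : CoeffSymm A) (hAper : CoeffPeriodic A)
    (hAell : CoeffElliptic lam Lam A) (hAhold : CoeffHolder α σ A)
    (γ : Matrix (Fin n) (Fin n) ℝ → ℝ)
    (hγ : ∀ M : Matrix (Fin n) (Fin n) ℝ, M.IsSymm → ∃ w : En n → ℝ, CellSol A M (γ M) w) :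
    ∃ abar : Matrix (Fin n) (Fin n) ℝ,
      abar.IsSymm ∧
      (∀ M : Matrix (Fin n) (Fin n) ℝ, M.IsSymm → γ M = ∑ i, ∑ j, abar i j * M i j) ∧
      ∀ ξ : En n,
        lam * ‖ξ‖ ^ 2 ≤ ∑ i, ∑ j, abar i j * ξ i * ξ j ∧
          ∑ i, ∑ j, abar i j * ξ i * ξ j ≤ Lam * ‖ξ‖ ^ 2 := by
  classical
  have uniq : ∀ {M : Matrix (Fin n) (Fin n) ℝ} {γ₁ γ₂ : ℝ} {w₁ w₂ : En n → ℝ},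
      CellSol A M γ₁ w₁ → CellSol A M γ₂ w₂ → γ₁ = γ₂ :=
    fun h1 h2 => cellSol_unique' hlam hAsymm hAell h1 h2
  have hγsmul : ∀ M : Matrix (Fin n) (Fin n) ℝ, M.IsSymm → ∀ c : ℝ, γ (c • M) = c * γ M := by
    intro M hM c
    obtain ⟨w, hw⟩ := hγ M hM
    obtain ⟨w', hw'⟩ := hγ (c • M) (hM.smul c)
    exact uniq hw' (cellSol_smul'' hw c)
  have hγadd : ∀ M N : Matrix (Fin n) (Fin n) ℝ, M.IsSymm → N.IsSymm →
      γ (M + N) = γ M + γ N := by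
    intro M N hM hN
    obtain ⟨w₁, hw₁⟩ := hγ M hM
    obtain ⟨w₂, hw₂⟩ := hγ N hN
    obtain ⟨w₃, hw₃⟩ := hγ (M + N) (hM.add hN)
    exact uniq hw₃ (cellSol_add'' hw₁ hw₂)
  have hγzero : γ 0 = 0 := by
    have := hγsmul 0 Matrix.isSymm_zero 0
    simpa using this
  -- the symmetrized basis matrices
  set S : Fin n → Fin n → Matrix (Fin n) (Fin n) ℝ :=
    fun i j => (2⁻¹ : ℝ) • (Matrix.single i j 1 + Matrix.single j i 1) with hS
  have hT : ∀ i j : Fin n, Matrix.single j i (1:ℝ) =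
      (Matrix.single i j (1:ℝ)).transpose := by
    intro i j
    ext k l
    simp only [Matrix.transpose_apply, Matrix.single, Matrix.of_apply]
    by_cases hjk : j = k <;> by_cases hil : i = l <;> simp [hjk, hil]
  have hSsymm : ∀ i j, (S i j).IsSymm := by
    intro i j
    rw [Matrix.IsSymm]
    simp only [hS]
    rw [hT i j, Matrix.transpose_smul, Matrix.transpose_add, Matrix.transpose_transpose,
      add_comm]
  have hSswap : ∀ i j, S j i = S i j := by
    intro i j
    simp only [hS]
    rw [add_comm]
  -- γ is additive over finite sums of symmetric matrices
  have hsymm_finsum : ∀ (s : Finset (Fin n × Fin n)) (f : Fin n × Fin n → ℝ),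
      (∑ p ∈ s, f p • S p.1 p.2).IsSymm := by
    intro s f
    rw [Matrix.IsSymm, Matrix.transpose_sum]
    exact Finset.sum_congr rfl fun p _ => by rw [Matrix.transpose_smul, hSsymm p.1 p.2]
  have hγsum : ∀ (s : Finset (Fin n × Fin n)) (f : Fin n × Fin n → ℝ),
      γ (∑ p ∈ s, f p • S p.1 p.2) = ∑ p ∈ s, f p * γ (S p.1 p.2) := by
    intro s
    induction s using Finset.induction_on with
    | empty => intro f; simpa using hγzero
    | @insert q s hq ih =>
      intro f
      rw [Finset.sum_insert hq, Finset.sum_insert hq,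
        hγadd _ _ ((hSsymm q.1 q.2).smul (f q)) (hsymm_finsum s f),
        hγsmul _ (hSsymm q.1 q.2) (f q), ih f]
  -- decomposition of a symmetric matrix
  have hdecomp : ∀ M : Matrix (Fin n) (Fin n) ℝ, M.IsSymm →
      M = ∑ p : Fin n × Fin n, M p.1 p.2 • S p.1 p.2 := by
    intro M hM
    ext k l
    rw [Matrix.sum_apply, Fintype.sum_prod_type]
    simp only [Matrix.smul_apply, hS, Matrix.add_apply, Matrix.single,
      Matrix.of_apply, smul_eq_mul, mul_ite, mul_one, mul_zero, ite_and, mul_add,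
      Finset.sum_add_distrib, Finset.sum_ite_eq, Finset.sum_ite_eq', Finset.mem_univ,
      if_true, Finset.sum_ite_irrel, Finset.sum_const_zero]
    have := hM.apply k l
    linarith
  have hlinear : ∀ M : Matrix (Fin n) (Fin n) ℝ, M.IsSymm →
      γ M = ∑ i, ∑ j, M i j * γ (S i j) := by
    intro M hM
    conv_lhs => rw [hdecomp M hM]
    rw [hγsum Finset.univ (fun p => M p.1 p.2)]
    exact Fintype.sum_prod_type (f := fun p : Fin n × Fin n => M p.1 p.2 * γ (S p.1 p.2))
  -- the effective matrix
  refine ⟨Matrix.of (fun i j => γ (S i j)), ?_, ?_, ?_⟩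
  · rw [Matrix.IsSymm]
    ext i j
    simp only [Matrix.transpose_apply, Matrix.of_apply]
    rw [hSswap]
  · intro M hM
    rw [hlinear M hM]
    exact Finset.sum_congr rfl fun i _ => Finset.sum_congr rfl fun j _ => by
      rw [Matrix.of_apply]; ring
  · intro ξ
    set Mξ : Matrix (Fin n) (Fin n) ℝ := Matrix.of (fun i j => ξ i * ξ j) with hMξ
    have hMsymm : Mξ.IsSymm := by
      rw [Matrix.IsSymm]
      ext i j
      simp only [Matrix.transpose_apply, hMξ, Matrix.of_apply]
      ring
    have hval : γ Mξ = ∑ i, ∑ j, Matrix.of (fun i j => γ (S i j)) i j * ξ i * ξ j := by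
      rw [hlinear Mξ hMsymm]
      exact Finset.sum_congr rfl fun i _ => Finset.sum_congr rfl fun j _ => by
        simp only [hMξ, Matrix.of_apply]; ring
    obtain ⟨w, hw⟩ := hγ Mξ hMsymm
    -- upper bound via the maximum of w
    have hupper : γ Mξ ≤ Lam * ‖ξ‖ ^ 2 := by
      obtain ⟨y₀, _, hineq⟩ := exists_max_with_ineq hlam hAsymm hAell hw.2.2.1 hw.2.1
      have heq := hw.2.2.2 y₀
      have hAM : ∑ i, ∑ j, A y₀ i j * Mξ i j = ∑ i, ∑ j, A y₀ i j * ξ i * ξ j := by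
        refine Finset.sum_congr rfl fun i _ => Finset.sum_congr rfl fun j _ => ?_
        simp only [hMξ, Matrix.of_apply]; ring
      have := (hAell y₀ ξ).2
      rw [hAM] at heq
      linarith
    -- lower bound via the maximum of -w
    have hlower : lam * ‖ξ‖ ^ 2 ≤ γ Mξ := by
      have hcu : ContDiff ℝ 2 (fun y => -(w y)) := hw.2.2.1.neg
      have hperu : ZPeriodic (fun y => -(w y)) := by
        intro y k
        simp only []
        rw [hw.2.1 y k]
      obtain ⟨y₁, _, hineq⟩ := exists_max_with_ineq hlam hAsymm hAell hcu hperu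
      have hflip : ∑ i, ∑ j, A y₁ i j * pd2 (fun y => -(w y)) i j y₁
          = -∑ i, ∑ j, A y₁ i j * pd2 w i j y₁ := by
        rw [← Finset.sum_neg_distrib]
        refine Finset.sum_congr rfl fun i _ => ?_
        rw [← Finset.sum_neg_distrib]
        refine Finset.sum_congr rfl fun j _ => ?_
        rw [pd2_neg'']; ring
      rw [hflip] at hineq
      have heq := hw.2.2.2 y₁
      have hAM : ∑ i, ∑ j, A y₁ i j * Mξ i j = ∑ i, ∑ j, A y₁ i j * ξ i * ξ j := by
        refine Finset.sum_congr rfl fun i _ => Finset.sum_congr rfl fun j _ => ?_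
        simp only [hMξ, Matrix.of_apply]; ring
      have := (hAell y₁ ξ).1
      rw [hAM] at heq
      linarith
    rw [← hval]
    exact ⟨hlower, hupper⟩
end
end

section
/- The linear interior correctors satisfy the two-scale recursion. Let m ≥ 3, assume A = (a_{ij}) satisfies (L1), (L2) and (L3), and let (ā_{i_1…i_l}, χ^{i_1…i_l}), 2 ≤ l ≤ m, be constants and ℤⁿ-periodic C² functions satisfying the recursion a_{ij}(y) D_{ij}χ^{i_1…i_l} + 2 a_{i_l j}(y) D_j χ^{i_1…i_{l−1}} + a_{i_{l−1} i_l}(y) χ^{i_1…i_{l−2}} = ā_{i_1…i_l} in ℝⁿ (with χ ≡ 1, χ^i ≡ 0). Let Ω ⊂ ℝⁿ be open and let ψ_0, ψ_1, …, ψ_m : Ω → ℝ with ψ_k of class C^{m−k+2} and satisfying, for 1 ≤ k ≤ m−2, ā_{ij} D_{ij}ψ_k = − Σ_{l=3}^{k+2} ā_{i_1…i_l} D_{i_1…i_l} ψ_{k−l+2} in Ω (where ψ_j with negative index is interpreted as 0). Define for 1 ≤ k ≤ m: w_k(y,x) = Σ_{l=2}^{k} χ^{i_1…i_l}(y) D_{x_{i_1}…x_{i_l}}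 ψ_{k−l}(x) + ψ_k(x). Then for each 3 ≤ k ≤ m and all (y,x) ∈ ℝⁿ × Ω: a_{ij}(y) D_{y_i y_j} w_k(y,x) + 2 a_{ij}(y) D_{x_i y_j} w_{k−1}(y,x) + a_{ij}(y) D_{x_i x_j} w_{k−2}(y,x) = 0. -/
open scoped Matrix.Norms.L2Operator
open Set

noncomputable section

/-- Iterated partial derivative `D_{i₁ … i_k} u (x)` along a list of coordinate directions. -/
def pdI {n : ℕ} (u : En n → ℝ) (l : List (Fin n)) (x : En n) : ℝ :=
  iteratedFDeriv ℝ l.length u x (fun j => EuclideanSpace.single (l.get j) 1)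

/-- Mixed partial derivative `D_{x_i y_j} w (y,x)` of a function of two `ℝⁿ`-variables. -/
def pdMix {n : ℕ} (w : En n → En n → ℝ) (i j : Fin n) (y x : En n) : ℝ :=
  fderiv ℝ (fun x' => fderiv ℝ (fun y' => w y' x') y (EuclideanSpace.single j 1)) x
    (EuclideanSpace.single i 1)

section Helpers

variable {n : ℕ}

private def dv (l : List (Fin n)) : Fin l.length → En n :=
  fun t => EuclideanSpace.single (l.get t) 1

private lemma pdI_eq_apply (u : En n → ℝ) (l : List (Fin n)) (x : En n) :
    pdI u l x = ContinuousMultilinearMap.apply ℝ (fun _ : Fin l.length => En n) ℝ (dv l)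
      (iteratedFDeriv ℝ l.length u x) := rfl

private lemma contDiffAt_pdI {u : En n → ℝ} {x : En n} {N d : ℕ} {l : List (Fin n)}
    (hu : ContDiffAt ℝ N u x) (h : d + l.length ≤ N) :
    ContDiffAt ℝ d (fun z => pdI u l z) x := by
  have h1 : ContDiffAt ℝ d (iteratedFDeriv ℝ l.length u) x :=
    hu.iteratedFDeriv_right (by exact_mod_cast h)
  exact ((ContinuousMultilinearMap.apply ℝ (fun _ : Fin l.length => En n) ℝ
    (dv l)).contDiff.contDiffAt).comp x h1

private lemma differentiableAt_pdI {u : En n → ℝ} {x : En n} {N : ℕ} {l : List (Fin n)}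
    (hu : ContDiffAt ℝ N u x) (h : l.length < N) :
    DifferentiableAt ℝ (fun z => pdI u l z) x :=
  (contDiffAt_pdI (d := 1) hu (by omega)).differentiableAt one_ne_zero

private lemma fderiv_pdI {u : En n → ℝ} {x : En n} {N : ℕ} {l : List (Fin n)}
    (hu : ContDiffAt ℝ N u x) (h : l.length < N) (i : Fin n) :
    fderiv ℝ (fun z => pdI u l z) x (EuclideanSpace.single i 1) = pdI u (i :: l) x := by
  have h' : 1 + l.length ≤ N := by omega
  have hd : DifferentiableAt ℝ (iteratedFDeriv ℝ l.length u) x :=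
    (hu.iteratedFDeriv_right (m := 1) (by exact_mod_cast h')).differentiableAt one_ne_zero
  have hc := (((ContinuousMultilinearMap.apply ℝ (fun _ : Fin l.length => En n) ℝ
    (dv l)).hasFDerivAt (x := iteratedFDeriv ℝ l.length u x)).comp x hd.hasFDerivAt).fderiv
  have h2 : fderiv ℝ (fun z => pdI u l z) x (EuclideanSpace.single i 1)
      = (fderiv ℝ (iteratedFDeriv ℝ l.length u) x (EuclideanSpace.single i 1)) (dv l) := by
    rw [show (fun z => pdI u l z) = (ContinuousMultilinearMap.apply ℝ
      (fun _ : Fin l.length => En n) ℝ (dv l)) ∘ (iteratedFDeriv ℝ l.length u) from rfl, hc]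
    rfl
  rw [h2, show pdI u (i :: l) x = iteratedFDeriv ℝ (l.length + 1) u x (dv (i :: l)) from rfl,
    iteratedFDeriv_succ_apply_left]
  rfl

private lemma fderiv_clm_eval {h : En n → (En n →L[ℝ] ℝ)} {x : En n}
    (hd : DifferentiableAt ℝ h x) (v w : En n) :
    fderiv ℝ (fun z => h z v) x w = fderiv ℝ h x w v := by
  have hc := (((ContinuousLinearMap.apply ℝ ℝ v).hasFDerivAt (x := h x)).comp
    x hd.hasFDerivAt).fderiv
  rw [show (fun z => h z v) = (ContinuousLinearMap.apply ℝ ℝ v) ∘ h from rfl, hc]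
  rfl

private lemma pd2_eq (u : En n → ℝ) (i j : Fin n) (x : En n) :
    pd2 u i j x = fderiv ℝ (fderiv ℝ u) x (EuclideanSpace.single i 1)
      (EuclideanSpace.single j 1) := by
  rw [pd2, iteratedFDeriv_two_apply]
  simp

private lemma pd2_eq_pdI (u : En n → ℝ) (i j : Fin n) (x : En n) :
    pd2 u i j x = pdI u [i, j] x := by
  rw [pd2, pdI]
  congr 1
  funext t
  fin_cases t <;> rfl

end Helpers
section Helpers2

variable {n : ℕ}

private lemma pdI_swap {u : En n → ℝ} {s : Set (En n)} (hs : IsOpen s) {N : ℕ}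
    (hu : ContDiffOn ℝ N u s) {l : List (Fin n)} (h : l.length + 2 ≤ N) (a b : Fin n)
    {x : En n} (hx : x ∈ s) :
    pdI u (a :: b :: l) x = pdI u (b :: a :: l) x := by
  have hAt : ∀ z ∈ s, ContDiffAt ℝ N u z := fun z hz => hu.contDiffAt (hs.mem_nhds hz)
  have hg2 : ContDiffAt ℝ ((2:ℕ) : WithTop ℕ∞) (fun z => pdI u l z) x :=
    contDiffAt_pdI (hAt x hx) (by omega)
  have hgd : DifferentiableAt ℝ (fderiv ℝ (fun z => pdI u l z)) x :=
    (hg2.fderiv_right (m := 1) (by norm_num)).differentiableAt one_ne_zero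
  have hsym := hg2.isSymmSndFDerivAt (by simp)
  have key : ∀ c d : Fin n, pdI u (c :: d :: l) x
      = fderiv ℝ (fderiv ℝ (fun z => pdI u l z)) x (EuclideanSpace.single c 1)
        (EuclideanSpace.single d 1) := by
    intro c d
    have he : (fun z => pdI u (d :: l) z) =ᶠ[nhds x]
        (fun z => fderiv ℝ (fun z' => pdI u l z') z (EuclideanSpace.single d 1)) :=
      Filter.eventuallyEq_of_mem (hs.mem_nhds hx)
        (fun z hz => (fderiv_pdI (hAt z hz) (by omega) d).symm)
    calc pdI u (c :: d :: l) x
        = fderiv ℝ (fun z => pdI u (d :: l) z) x (EuclideanSpace.single c 1) :=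
          (fderiv_pdI (hAt x hx) (by simp; omega) c).symm
      _ = fderiv ℝ (fun z => fderiv ℝ (fun z' => pdI u l z') z (EuclideanSpace.single d 1)) x
            (EuclideanSpace.single c 1) := by rw [he.fderiv_eq]
      _ = _ := fderiv_clm_eval hgd _ _
  rw [key a b, key b a, hsym.eq]

private lemma pdI_rotate {u : En n → ℝ} {s : Set (En n)} (hs : IsOpen s) {N : ℕ}
    (hu : ContDiffOn ℝ N u s) :
    ∀ (l : List (Fin n)), l.length + 1 ≤ N → ∀ (i : Fin n), ∀ x ∈ s,
      pdI u (i :: l) x = pdI u (l ++ [i]) x := by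
  intro l
  induction l with
  | nil => intro _ i x _; rfl
  | cons b t ih =>
    intro h i x hx
    have hAt : ∀ z ∈ s, ContDiffAt ℝ N u z := fun z hz => hu.contDiffAt (hs.mem_nhds hz)
    have hlen : t.length + 2 ≤ N := by simp at h; omega
    have h1 : pdI u (i :: b :: t) x = pdI u (b :: i :: t) x := pdI_swap hs hu hlen i b hx
    have h2 : pdI u (b :: i :: t) x
        = fderiv ℝ (fun z => pdI u (i :: t) z) x (EuclideanSpace.single b 1) :=
      (fderiv_pdI (hAt x hx) (by simp; omega) b).symm
    have he : (fun z => pdI u (i :: t) z) =ᶠ[nhds x] (fun z => pdI u (t ++ [i]) z) :=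
      Filter.eventuallyEq_of_mem (hs.mem_nhds hx)
        (fun z hz => ih (by simp at h ⊢; omega) i z hz)
    rw [h1, h2, he.fderiv_eq, fderiv_pdI (hAt x hx) (by simp; omega) b]
    rfl

private lemma pdI_rotate2 {u : En n → ℝ} {s : Set (En n)} (hs : IsOpen s) {N : ℕ}
    (hu : ContDiffOn ℝ N u s) (l : List (Fin n)) (h : l.length + 2 ≤ N) (i j : Fin n)
    {x : En n} (hx : x ∈ s) :
    pdI u (i :: j :: l) x = pdI u (l ++ [i, j]) x := by
  have h1 := pdI_rotate hs hu (j :: l) (by simp; omega) i x hx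
  have h2 := pdI_rotate hs hu (l ++ [i]) (by simp; omega) j x hx
  rw [h1, show (j :: l) ++ [i] = j :: (l ++ [i]) from rfl, h2]
  simp

private def snocE (s : ℕ) : ((Fin s → Fin n) × Fin n) ≃ (Fin (s + 1) → Fin n) where
  toFun a := Fin.snoc a.1 a.2
  invFun v := (Fin.init v, v (Fin.last s))
  left_inv a := by simp
  right_inv v := by simp

private lemma ofFn_snoc {s : ℕ} (w : Fin s → Fin n) (q : Fin n) :
    List.ofFn (Fin.snoc w q : Fin (s + 1) → Fin n) = List.ofFn w ++ [q] := by
  rw [List.ofFn_succ']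
  simp [List.concat_eq_append]

private lemma sum_split (s : ℕ) (F : List (Fin n) → ℝ) :
    ∑ v : Fin (s + 1) → Fin n, F (List.ofFn v)
      = ∑ w : Fin s → Fin n, ∑ q : Fin n, F (List.ofFn w ++ [q]) := by
  rw [← Equiv.sum_comp (snocE s) (fun v : Fin (s+1) → Fin n => F (List.ofFn v)),
    Fintype.sum_prod_type]
  exact Finset.sum_congr rfl fun w _ => Finset.sum_congr rfl fun q _ => by
    show F (List.ofFn (Fin.snoc w q)) = _
    rw [ofFn_snoc]

private lemma sum_Icc_shift (k c : ℕ) (hc : c ≤ k) (f : ℕ → ℝ) :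
    ∑ r ∈ Finset.Icc c k, f r = ∑ s ∈ Finset.Icc 0 (k - c), f (s + c) := by
  have h0 : Finset.Icc c k = Finset.Icc (0 + c) (k - c + c) := by congr 1 <;> omega
  rw [h0, ← Finset.map_add_right_Icc, Finset.sum_map]
  rfl

private lemma sum_ij_swap {α : Type*} (I : Finset α) (a : Fin n → Fin n → ℝ)
    (g : Fin n → Fin n → α → ℝ) :
    ∑ i, ∑ j, a i j * ∑ s ∈ I, g i j s = ∑ s ∈ I, ∑ i, ∑ j, a i j * g i j s := by
  simp only [Finset.mul_sum]
  calc ∑ i, ∑ j, ∑ s ∈ I, a i j * g i j s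
      = ∑ i, ∑ s ∈ I, ∑ j, a i j * g i j s :=
        Finset.sum_congr rfl fun i _ => Finset.sum_comm
    _ = _ := Finset.sum_comm

end Helpers2
/-- **The linear interior correctors satisfy the two-scale recursion.** With correctors
`χ^{i₁…i_l}` solving the fast-variable recursion and slow-variable profiles `ψ_k` solving the
compatibility equations, the functions
`w_k(y,x) = Σ_{l=2}^{k} χ^{i₁…i_l}(y) D_{x_{i₁}…x_{i_l}} ψ_{k-l}(x) + ψ_k(x)` satisfy
`a_{ij} D_{y_i y_j} w_k + 2 a_{ij} D_{x_i y_j} w_{k-1} + a_{ij} D_{x_i x_j} w_{k-2} = 0`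
on `ℝⁿ × Ω` for `3 ≤ k ≤ m`. -/
theorem linear_interior_correctors_recursion
    (n : ℕ) (hn : 1 ≤ n) (m : ℕ) (hm : 3 ≤ m) (lam Lam σ α : ℝ)
    (hlam : 0 < lam) (hlamLam : lam ≤ Lam) (hσ : 0 < σ) (hα : α ∈ Set.Ioc (0:ℝ) 1)
    (A : En n → Matrix (Fin n) (Fin n) ℝ)
    (hAsymm : CoeffSymm A) (hAper : CoeffPeriodic A)
    (hAell : CoeffElliptic lam Lam A) (hAhold : CoeffHolder α σ A)
    (abar : List (Fin n) → ℝ) (χ : List (Fin n) → En n → ℝ)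
    (hχnil : ∀ y : En n, χ [] y = 1)
    (hχone : ∀ (i : Fin n) (y : En n), χ [i] y = 0)
    (hχreg : ∀ l : List (Fin n), 2 ≤ l.length → l.length ≤ m →
      ZPeriodic (χ l) ∧ ContDiff ℝ 2 (χ l))
    (hrec : ∀ (l : List (Fin n)) (p q : Fin n), l.length + 2 ≤ m →
      ∀ y : En n,
        (∑ i, ∑ j, A y i j * pd2 (χ (l ++ [p, q])) i j y)
          + 2 * (∑ j, A y q j * pd1 (χ (l ++ [p])) j y)
          + A y p q * χ l y = abar (l ++ [p, q]))
    (Ω : Set (En n)) (hΩ : IsOpen Ω)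
    (ψ : ℕ → En n → ℝ)
    (hψreg : ∀ k : ℕ, k ≤ m → ContDiffOn ℝ (m - k + 2) (ψ k) Ω)
    (hψpde : ∀ k : ℕ, 1 ≤ k → k ≤ m - 2 → ∀ x ∈ Ω,
      ∑ i, ∑ j, abar [i, j] * pd2 (ψ k) i j x =
        - ∑ l ∈ Finset.Icc 3 (k + 2), ∑ v : Fin l → Fin n,
            abar (List.ofFn v) * pdI (ψ (k + 2 - l)) (List.ofFn v) x)
    (W : ℕ → En n → En n → ℝ)
    (hW : ∀ (k : ℕ) (y x : En n),
      W k y x =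
        (∑ l ∈ Finset.Icc 2 k, ∑ v : Fin l → Fin n,
          χ (List.ofFn v) y * pdI (ψ (k - l)) (List.ofFn v) x) + ψ k x) :
    ∀ k : ℕ, 3 ≤ k → k ≤ m → ∀ (y : En n), ∀ x ∈ Ω,
      (∑ i, ∑ j, A y i j * pd2 (fun y' => W k y' x) i j y)
        + 2 * (∑ i, ∑ j, A y i j * pdMix (W (k - 1)) i j y x)
        + (∑ i, ∑ j, A y i j * pd2 (fun x' => W (k - 2) y x') i j x) = 0 := by
  intro k hk3 hkm y x hx
  classical
  -- cast bookkeeping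
  have h11 : ((1 : WithTop ℕ∞) + 1 ≤ 2) := by norm_num
  have h12 : ((2 : WithTop ℕ∞) ≠ 0) := by norm_num
  have hcast : ∀ t : ℕ, ((m : WithTop ℕ∞) - t + 2) = ((m - t + 2 : ℕ) : WithTop ℕ∞) := by
    intro t
    have h1 : ((m - t : ℕ) : WithTop ℕ∞) = (m : WithTop ℕ∞) - (t : ℕ) := by
      rw [show ((m - t : ℕ) : WithTop ℕ∞) = (((m - t : ℕ) : ℕ∞) : WithTop ℕ∞) from rfl,
        ENat.coe_sub, WithTop.coe_sub]
      rfl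
    push_cast [h1]
    ring
  have hψOn : ∀ t : ℕ, t ≤ m → ContDiffOn ℝ ((m - t + 2 : ℕ) : WithTop ℕ∞) (ψ t) Ω := by
    intro t ht
    have := hψreg t ht
    rwa [hcast t] at this
  have hψAt : ∀ t : ℕ, t ≤ m → ∀ z ∈ Ω, ContDiffAt ℝ ((m - t + 2 : ℕ) : WithTop ℕ∞) (ψ t) z :=
    fun t ht z hz => (hψOn t ht).contDiffAt (hΩ.mem_nhds hz)
  have hχC : ∀ L : List (Fin n), 2 ≤ L.length → L.length ≤ m → ContDiff ℝ 2 (χ L) :=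
    fun L h1 h2 => (hχreg L h1 h2).2
  -- Claim 1 : the pure y-derivative of W k
  have hT1 : ∀ i j : Fin n, pd2 (fun y' => W k y' x) i j y
      = ∑ r ∈ Finset.Icc 2 k, ∑ v : Fin r → Fin n,
          pd2 (χ (List.ofFn v)) i j y * pdI (ψ (k - r)) (List.ofFn v) x := by
    intro i j
    have hχd : ∀ r ∈ Finset.Icc 2 k, ∀ v : Fin r → Fin n, ContDiff ℝ 2 (χ (List.ofFn v)) := by
      intro r hr v
      simp only [Finset.mem_Icc] at hr
      exact hχC _ (by simp [hr.1]) (by simp; omega)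
    have hrw : (fun y' => W k y' x) = fun y' =>
        (∑ r ∈ Finset.Icc 2 k, ∑ v : Fin r → Fin n,
          χ (List.ofFn v) y' * pdI (ψ (k - r)) (List.ofFn v) x) + ψ k x := by
      funext y'
      exact hW k y' x
    have hfd : fderiv ℝ (fun y' => W k y' x) = fun z =>
        ∑ r ∈ Finset.Icc 2 k, ∑ v : Fin r → Fin n,
          pdI (ψ (k - r)) (List.ofFn v) x • fderiv ℝ (χ (List.ofFn v)) z := by
      funext z
      rw [hrw, fderiv_add_const]
      rw [fderiv_fun_sum (fun r hr => DifferentiableAt.fun_sum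
        (fun v _ => (((hχd r hr v).differentiable h12) z).mul_const _))]
      refine Finset.sum_congr rfl fun r hr => ?_
      rw [fderiv_fun_sum (fun v _ => (((hχd r hr v).differentiable h12) z).mul_const _)]
      refine Finset.sum_congr rfl fun v _ => ?_
      exact fderiv_mul_const (((hχd r hr v).differentiable h12) z) _
    have hfd2 : fderiv ℝ (fun z =>
        ∑ r ∈ Finset.Icc 2 k, ∑ v : Fin r → Fin n,
          pdI (ψ (k - r)) (List.ofFn v) x • fderiv ℝ (χ (List.ofFn v)) z) y
        = ∑ r ∈ Finset.Icc 2 k, ∑ v : Fin r → Fin n,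
            pdI (ψ (k - r)) (List.ofFn v) x • fderiv ℝ (fderiv ℝ (χ (List.ofFn v))) y := by
      have hd : ∀ r ∈ Finset.Icc 2 k, ∀ v : Fin r → Fin n,
          DifferentiableAt ℝ (fderiv ℝ (χ (List.ofFn v))) y := fun r hr v =>
        (((hχd r hr v).contDiffAt.fderiv_right (m := 1) h11).differentiableAt one_ne_zero)
      rw [fderiv_fun_sum (fun r hr => DifferentiableAt.fun_sum
        (fun v _ => (show DifferentiableAt ℝ (fun z => pdI (ψ (k - r)) (List.ofFn v) x • fderiv ℝ (χ (List.ofFn v)) z) y from (hd r hr v).const_smul (pdI (ψ (k - r)) (List.ofFn v) x))))]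
      refine Finset.sum_congr rfl fun r hr => ?_
      rw [fderiv_fun_sum (fun v _ => (show DifferentiableAt ℝ (fun z => pdI (ψ (k - r)) (List.ofFn v) x • fderiv ℝ (χ (List.ofFn v)) z) y from (hd r hr v).const_smul (pdI (ψ (k - r)) (List.ofFn v) x)))]
      refine Finset.sum_congr rfl fun v _ => ?_
      exact fderiv_fun_const_smul (hd r hr v) _
    rw [pd2_eq, hfd, hfd2]
    simp only [ContinuousLinearMap.sum_apply, ContinuousLinearMap.smul_apply, smul_eq_mul]
    exact Finset.sum_congr rfl fun r hr => Finset.sum_congr rfl fun v _ => by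
      rw [pd2_eq]; ring
  -- Claim 2 : the mixed derivative of W (k-1)
  have hT2 : ∀ i j : Fin n, pdMix (W (k - 1)) i j y x
      = ∑ r ∈ Finset.Icc 2 (k - 1), ∑ v : Fin r → Fin n,
          pd1 (χ (List.ofFn v)) j y * pdI (ψ (k - 1 - r)) (List.ofFn v ++ [i]) x := by
    intro i j
    have hχd : ∀ r ∈ Finset.Icc 2 (k - 1), ∀ v : Fin r → Fin n,
        ContDiff ℝ 2 (χ (List.ofFn v)) := by
      intro r hr v
      simp only [Finset.mem_Icc] at hr
      exact hχC _ (by simp [hr.1]) (by simp; omega)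
    have hinner : ∀ x' : En n,
        fderiv ℝ (fun y' => W (k - 1) y' x') y (EuclideanSpace.single j 1)
        = ∑ r ∈ Finset.Icc 2 (k - 1), ∑ v : Fin r → Fin n,
            pd1 (χ (List.ofFn v)) j y * pdI (ψ (k - 1 - r)) (List.ofFn v) x' := by
      intro x'
      have hrw : (fun y' => W (k - 1) y' x') = fun y' =>
          (∑ r ∈ Finset.Icc 2 (k - 1), ∑ v : Fin r → Fin n,
            χ (List.ofFn v) y' * pdI (ψ (k - 1 - r)) (List.ofFn v) x') + ψ (k - 1) x' := by
        funext y'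
        exact hW (k - 1) y' x'
      rw [hrw, fderiv_add_const]
      rw [fderiv_fun_sum (fun r hr => DifferentiableAt.fun_sum
        (fun v _ => (((hχd r hr v).differentiable h12) y).mul_const _))]
      simp only [ContinuousLinearMap.sum_apply]
      refine Finset.sum_congr rfl fun r hr => ?_
      rw [fderiv_fun_sum (fun v _ => (((hχd r hr v).differentiable h12) y).mul_const _)]
      simp only [ContinuousLinearMap.sum_apply]
      refine Finset.sum_congr rfl fun v _ => ?_
      rw [fderiv_mul_const (((hχd r hr v).differentiable h12) y) _]
      simp only [ContinuousLinearMap.smul_apply, smul_eq_mul]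
      rw [pd1]
      ring
    rw [pdMix]
    have hre : (fun x' => fderiv ℝ (fun y' => W (k - 1) y' x') y (EuclideanSpace.single j 1))
        = fun x' => ∑ r ∈ Finset.Icc 2 (k - 1), ∑ v : Fin r → Fin n,
            pd1 (χ (List.ofFn v)) j y * pdI (ψ (k - 1 - r)) (List.ofFn v) x' := funext hinner
    rw [hre]
    have hdiff : ∀ r ∈ Finset.Icc 2 (k - 1), ∀ v : Fin r → Fin n,
        DifferentiableAt ℝ (fun x' => pdI (ψ (k - 1 - r)) (List.ofFn v) x') x := by
      intro r hr v
      simp only [Finset.mem_Icc] at hr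
      refine differentiableAt_pdI (hψAt (k - 1 - r) (by omega) x hx) ?_
      simp
      omega
    rw [fderiv_fun_sum (fun r hr => DifferentiableAt.fun_sum fun v _ => (hdiff r hr v).const_mul _)]
    simp only [ContinuousLinearMap.sum_apply]
    refine Finset.sum_congr rfl fun r hr => ?_
    rw [fderiv_fun_sum (fun v _ => (hdiff r hr v).const_mul _)]
    simp only [ContinuousLinearMap.sum_apply]
    refine Finset.sum_congr rfl fun v _ => ?_
    rw [fderiv_const_mul (hdiff r hr v) _]
    simp only [ContinuousLinearMap.smul_apply, smul_eq_mul]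
    congr 1
    simp only [Finset.mem_Icc] at hr
    rw [fderiv_pdI (hψAt (k - 1 - r) (by omega) x hx) (by simp; omega) i]
    exact pdI_rotate hΩ (hψOn (k - 1 - r) (by omega)) (List.ofFn v) (by simp; omega) i x hx
  -- Claim 3 : the pure x-derivative of W (k-2)
  have hT3 : ∀ i j : Fin n, pd2 (fun x' => W (k - 2) y x') i j x
      = (∑ r ∈ Finset.Icc 2 (k - 2), ∑ v : Fin r → Fin n,
          χ (List.ofFn v) y * pdI (ψ (k - 2 - r)) (List.ofFn v ++ [i, j]) x)
        + pdI (ψ (k - 2)) [i, j] x := by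
    intro i j
    have hdiff : ∀ z ∈ Ω, ∀ r ∈ Finset.Icc 2 (k - 2), ∀ v : Fin r → Fin n,
        DifferentiableAt ℝ (fun x' => pdI (ψ (k - 2 - r)) (List.ofFn v) x') z := by
      intro z hz r hr v
      simp only [Finset.mem_Icc] at hr
      refine differentiableAt_pdI (hψAt (k - 2 - r) (by omega) z hz) ?_
      simp
      omega
    have hψd : ∀ z ∈ Ω, DifferentiableAt ℝ (ψ (k - 2)) z := by
      intro z hz
      refine (hψAt (k - 2) (by omega) z hz).differentiableAt ?_
      exact_mod_cast (show m - (k - 2) + 2 ≠ 0 by omega)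
    have hrw : (fun x' => W (k - 2) y x') = fun x' =>
        (∑ r ∈ Finset.Icc 2 (k - 2), ∑ v : Fin r → Fin n,
          χ (List.ofFn v) y * pdI (ψ (k - 2 - r)) (List.ofFn v) x') + ψ (k - 2) x' := by
      funext x'
      exact hW (k - 2) y x'
    have hfe : fderiv ℝ (fun x' => W (k - 2) y x') =ᶠ[nhds x] fun z =>
        (∑ r ∈ Finset.Icc 2 (k - 2), ∑ v : Fin r → Fin n,
          χ (List.ofFn v) y • fderiv ℝ (fun x' => pdI (ψ (k - 2 - r)) (List.ofFn v) x') z)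
        + fderiv ℝ (ψ (k - 2)) z := by
      refine Filter.eventuallyEq_of_mem (hΩ.mem_nhds hx) (fun z hz => ?_)
      rw [hrw, fderiv_fun_add (DifferentiableAt.fun_sum fun r hr => DifferentiableAt.fun_sum
        (fun v _ => (hdiff z hz r hr v).const_mul _)) (hψd z hz)]
      congr 1
      rw [fderiv_fun_sum (fun r hr => DifferentiableAt.fun_sum
        (fun v _ => (hdiff z hz r hr v).const_mul _))]
      refine Finset.sum_congr rfl fun r hr => ?_
      rw [fderiv_fun_sum (fun v _ => (hdiff z hz r hr v).const_mul _)]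
      exact Finset.sum_congr rfl fun v _ => fderiv_const_mul (hdiff z hz r hr v) _
    have hd2 : ∀ r ∈ Finset.Icc 2 (k - 2), ∀ v : Fin r → Fin n,
        DifferentiableAt ℝ
          (fderiv ℝ (fun x' => pdI (ψ (k - 2 - r)) (List.ofFn v) x')) x := by
      intro r hr v
      simp only [Finset.mem_Icc] at hr
      have hc2 : ContDiffAt ℝ ((2 : ℕ) : WithTop ℕ∞)
          (fun x' => pdI (ψ (k - 2 - r)) (List.ofFn v) x') x :=
        contDiffAt_pdI (hψAt (k - 2 - r) (by omega) x hx) (by simp; omega)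
      exact (hc2.fderiv_right (m := 1) (by exact_mod_cast h11)).differentiableAt one_ne_zero
    have hdψ2 : DifferentiableAt ℝ (fderiv ℝ (ψ (k - 2))) x := by
      refine ((hψAt (k - 2) (by omega) x hx).fderiv_right (m := 1) ?_).differentiableAt one_ne_zero
      have : (1 + 1 : ℕ) ≤ m - (k - 2) + 2 := by omega
      exact_mod_cast this
    rw [pd2_eq, hfe.fderiv_eq]
    rw [fderiv_fun_add (DifferentiableAt.fun_sum fun r hr => DifferentiableAt.fun_sum
      (fun v _ => (show DifferentiableAt ℝ (fun z => χ (List.ofFn v) y • fderiv ℝ (fun x' => pdI (ψ (k - 2 - r)) (List.ofFn v) x') z) x from (hd2 r hr v).const_smul (χ (List.ofFn v) y)))) hdψ2]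
    rw [fderiv_fun_sum (fun r hr => DifferentiableAt.fun_sum
      (fun v _ => (show DifferentiableAt ℝ (fun z => χ (List.ofFn v) y • fderiv ℝ (fun x' => pdI (ψ (k - 2 - r)) (List.ofFn v) x') z) x from (hd2 r hr v).const_smul (χ (List.ofFn v) y))))]
    simp only [ContinuousLinearMap.add_apply, ContinuousLinearMap.sum_apply]
    congr 1
    · refine Finset.sum_congr rfl fun r hr => ?_
      rw [fderiv_fun_sum (fun v _ => (show DifferentiableAt ℝ (fun z => χ (List.ofFn v) y • fderiv ℝ (fun x' => pdI (ψ (k - 2 - r)) (List.ofFn v) x') z) x from (hd2 r hr v).const_smul (χ (List.ofFn v) y)))]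
      simp only [ContinuousLinearMap.sum_apply]
      refine Finset.sum_congr rfl fun v _ => ?_
      rw [fderiv_fun_const_smul (hd2 r hr v) _]
      simp only [ContinuousLinearMap.smul_apply, smul_eq_mul]
      congr 1
      -- second derivative of pdI term
      simp only [Finset.mem_Icc] at hr
      have hN : ∀ z ∈ Ω, ContDiffAt ℝ ((m - (k - 2 - r) + 2 : ℕ) : WithTop ℕ∞)
          (ψ (k - 2 - r)) z := fun z hz => hψAt (k - 2 - r) (by omega) z hz
      have he2 : (fun z => fderiv ℝ (fun x' => pdI (ψ (k - 2 - r)) (List.ofFn v) x') z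
            (EuclideanSpace.single j 1))
          =ᶠ[nhds x] fun z => pdI (ψ (k - 2 - r)) (j :: List.ofFn v) z :=
        Filter.eventuallyEq_of_mem (hΩ.mem_nhds hx)
          (fun z hz => fderiv_pdI (hN z hz) (by simp; omega) j)
      calc fderiv ℝ (fderiv ℝ (fun x' => pdI (ψ (k - 2 - r)) (List.ofFn v) x')) x
            (EuclideanSpace.single i 1) (EuclideanSpace.single j 1)
          = fderiv ℝ (fun z => fderiv ℝ (fun x' => pdI (ψ (k - 2 - r)) (List.ofFn v) x') z
              (EuclideanSpace.single j 1)) x (EuclideanSpace.single i 1) :=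
            (fderiv_clm_eval (hd2 r (by simp only [Finset.mem_Icc]; omega) v) _ _).symm
        _ = fderiv ℝ (fun z => pdI (ψ (k - 2 - r)) (j :: List.ofFn v) z) x
              (EuclideanSpace.single i 1) := by rw [he2.fderiv_eq]
        _ = pdI (ψ (k - 2 - r)) (i :: j :: List.ofFn v) x :=
            fderiv_pdI (hN x hx) (by simp; omega) i
        _ = pdI (ψ (k - 2 - r)) (List.ofFn v ++ [i, j]) x :=
            pdI_rotate2 hΩ (hψOn (k - 2 - r) (by omega)) (List.ofFn v) (by simp; omega) i j hx
    · rw [← pd2_eq, pd2_eq_pdI]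
  -- generic reindexing of the multi-index sums
  have hreidx : ∀ G : List (Fin n) → ℕ → ℝ,
      (∑ r ∈ Finset.Icc 2 k, ∑ v : Fin r → Fin n, G (List.ofFn v) r)
      = ∑ s ∈ Finset.Icc 0 (k - 2), ∑ w : Fin s → Fin n, ∑ p, ∑ q,
          G (List.ofFn w ++ [p, q]) (s + 2) := by
    intro G
    refine (sum_Icc_shift k 2 (by omega)
      (fun r => ∑ v : Fin r → Fin n, G (List.ofFn v) r)).trans ?_
    refine Finset.sum_congr rfl fun s hs => ?_
    show ∑ v : Fin (s + 2) → Fin n, G (List.ofFn v) (s + 2) = _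
    refine (sum_split (s + 1) (fun L => G L (s + 2))).trans ?_
    refine (sum_split s (fun L => ∑ q, G (L ++ [q]) (s + 2))).trans ?_
    refine Finset.sum_congr rfl fun w _ => Finset.sum_congr rfl fun p _ =>
      Finset.sum_congr rfl fun q _ => ?_
    show G ((List.ofFn w ++ [p]) ++ [q]) (s + 2) = G (List.ofFn w ++ [p, q]) (s + 2)
    rw [List.append_assoc]
    rfl
  -- Part 1
  have eA1 : (∑ i, ∑ j, A y i j * pd2 (fun y' => W k y' x) i j y)
      = ∑ s ∈ Finset.Icc 0 (k - 2), ∑ w : Fin s → Fin n, ∑ p, ∑ q,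
          (∑ i, ∑ j, A y i j * pd2 (χ (List.ofFn w ++ [p, q])) i j y)
            * pdI (ψ (k - (s + 2))) (List.ofFn w ++ [p, q]) x := by
    have e1 : (∑ i, ∑ j, A y i j * pd2 (fun y' => W k y' x) i j y)
        = ∑ i, ∑ j, A y i j * ∑ s ∈ Finset.Icc 0 (k - 2), ∑ w : Fin s → Fin n, ∑ p, ∑ q,
            pd2 (χ (List.ofFn w ++ [p, q])) i j y
              * pdI (ψ (k - (s + 2))) (List.ofFn w ++ [p, q]) x :=
      Finset.sum_congr rfl fun i _ => Finset.sum_congr rfl fun j _ => by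
        rw [hT1 i j]
        congr 1
        exact hreidx (fun L r => pd2 (χ L) i j y * pdI (ψ (k - r)) L x)
    rw [e1, sum_ij_swap (a := A y)]
    refine Finset.sum_congr rfl fun s _ => ?_
    rw [sum_ij_swap (a := A y)]
    refine Finset.sum_congr rfl fun w _ => ?_
    rw [sum_ij_swap (a := A y)]
    refine Finset.sum_congr rfl fun p _ => ?_
    rw [sum_ij_swap (a := A y)]
    refine Finset.sum_congr rfl fun q _ => ?_
    rw [Finset.sum_mul]
    refine Finset.sum_congr rfl fun i _ => ?_
    rw [Finset.sum_mul]
    exact Finset.sum_congr rfl fun j _ => by ring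
  -- Part 2
  have eA2 : 2 * (∑ i, ∑ j, A y i j * pdMix (W (k - 1)) i j y x)
      = ∑ s ∈ Finset.Icc 0 (k - 2), ∑ w : Fin s → Fin n, ∑ p, ∑ q,
          (2 * ∑ j, A y q j * pd1 (χ (List.ofFn w ++ [p])) j y)
            * pdI (ψ (k - (s + 2))) (List.ofFn w ++ [p, q]) x := by
    have hM : (∑ i, ∑ j, A y i j * pdMix (W (k - 1)) i j y x)
        = ∑ r ∈ Finset.Icc 2 (k - 1), ∑ v : Fin r → Fin n, ∑ i, ∑ j,
            A y i j * (pd1 (χ (List.ofFn v)) j y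
              * pdI (ψ (k - 1 - r)) (List.ofFn v ++ [i]) x) := by
      have e1 : (∑ i, ∑ j, A y i j * pdMix (W (k - 1)) i j y x)
          = ∑ i, ∑ j, A y i j * ∑ r ∈ Finset.Icc 2 (k - 1), ∑ v : Fin r → Fin n,
              pd1 (χ (List.ofFn v)) j y * pdI (ψ (k - 1 - r)) (List.ofFn v ++ [i]) x :=
        Finset.sum_congr rfl fun i _ => Finset.sum_congr rfl fun j _ => by rw [hT2 i j]
      rw [e1, sum_ij_swap (a := A y)]
      exact Finset.sum_congr rfl fun r _ => by rw [sum_ij_swap (a := A y)]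
    have hz : ∀ p jj : Fin n, pd1 (χ [p]) jj y = 0 := by
      intro p jj
      have hc : χ [p] = fun _ => (0 : ℝ) := funext fun z => hχone p z
      rw [pd1, hc]
      simp
    have hR : (∑ s ∈ Finset.Icc 0 (k - 2), ∑ w : Fin s → Fin n, ∑ p, ∑ q,
          (2 * ∑ j, A y q j * pd1 (χ (List.ofFn w ++ [p])) j y)
            * pdI (ψ (k - (s + 2))) (List.ofFn w ++ [p, q]) x)
        = ∑ r ∈ Finset.Icc 1 (k - 1), ∑ v : Fin r → Fin n, ∑ q,
            (2 * ∑ j, A y q j * pd1 (χ (List.ofFn v)) j y)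
              * pdI (ψ (k - (r + 1))) (List.ofFn v ++ [q]) x := by
      refine Eq.symm ?_
      refine (sum_Icc_shift (k - 1) 1 (by omega) (fun r => ∑ v : Fin r → Fin n, ∑ q,
        (2 * ∑ j, A y q j * pd1 (χ (List.ofFn v)) j y)
          * pdI (ψ (k - (r + 1))) (List.ofFn v ++ [q]) x)).trans ?_
      rw [show k - 1 - 1 = k - 2 from by omega]
      refine Finset.sum_congr rfl fun s hs => ?_
      show ∑ v : Fin (s + 1) → Fin n, ∑ q,
          (2 * ∑ j, A y q j * pd1 (χ (List.ofFn v)) j y)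
            * pdI (ψ (k - (s + 1 + 1))) (List.ofFn v ++ [q]) x = _
      refine (sum_split s (fun L => ∑ q, (2 * ∑ j, A y q j * pd1 (χ L) j y)
        * pdI (ψ (k - (s + 1 + 1))) (L ++ [q]) x)).trans ?_
      refine Finset.sum_congr rfl fun w _ => Finset.sum_congr rfl fun p _ =>
        Finset.sum_congr rfl fun q _ => ?_
      show (2 * ∑ j, A y q j * pd1 (χ (List.ofFn w ++ [p])) j y)
          * pdI (ψ (k - (s + 1 + 1))) ((List.ofFn w ++ [p]) ++ [q]) x = _
      rw [List.append_assoc]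
      rfl
    rw [hR, show Finset.Icc 1 (k - 1) = insert 1 (Finset.Icc 2 (k - 1)) from by
        ext t; simp; omega,
      Finset.sum_insert (by simp)]
    have hz1 : (∑ v : Fin 1 → Fin n, ∑ q,
        (2 * ∑ j, A y q j * pd1 (χ (List.ofFn v)) j y)
          * pdI (ψ (k - (1 + 1))) (List.ofFn v ++ [q]) x) = 0 := by
      refine Finset.sum_eq_zero fun v _ => Finset.sum_eq_zero fun q _ => ?_
      have : List.ofFn v = [v 0] := by simp [List.ofFn_succ]
      rw [this]
      simp [hz]
    rw [hz1, zero_add, hM, Finset.mul_sum]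
    refine Finset.sum_congr rfl fun r _ => ?_
    rw [Finset.mul_sum]
    refine Finset.sum_congr rfl fun v _ => ?_
    rw [show k - (r + 1) = k - 1 - r from by omega, Finset.mul_sum]
    refine Finset.sum_congr rfl fun q _ => ?_
    simp only [Finset.mul_sum, Finset.sum_mul]
    exact Finset.sum_congr rfl fun j _ => by ring
  -- Part 3
  have eA3 : (∑ i, ∑ j, A y i j * pd2 (fun x' => W (k - 2) y x') i j x)
      = ∑ s ∈ Finset.Icc 0 (k - 2), ∑ w : Fin s → Fin n, ∑ p, ∑ q,
          (A y p q * χ (List.ofFn w) y)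
            * pdI (ψ (k - (s + 2))) (List.ofFn w ++ [p, q]) x := by
    have hidx : ∀ r : ℕ, k - (r + 2) = k - 2 - r := fun r => by omega
    have e1 : (∑ i, ∑ j, A y i j * pd2 (fun x' => W (k - 2) y x') i j x)
        = (∑ r ∈ Finset.Icc 2 (k - 2), ∑ v : Fin r → Fin n, ∑ i, ∑ j,
            A y i j * (χ (List.ofFn v) y
              * pdI (ψ (k - 2 - r)) (List.ofFn v ++ [i, j]) x))
          + ∑ i, ∑ j, A y i j * pdI (ψ (k - 2)) [i, j] x := by
      have e2 : (∑ i, ∑ j, A y i j * pd2 (fun x' => W (k - 2) y x') i j x)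
          = (∑ i, ∑ j, A y i j * ∑ r ∈ Finset.Icc 2 (k - 2), ∑ v : Fin r → Fin n,
              χ (List.ofFn v) y * pdI (ψ (k - 2 - r)) (List.ofFn v ++ [i, j]) x)
            + ∑ i, ∑ j, A y i j * pdI (ψ (k - 2)) [i, j] x := by
        simp only [← Finset.sum_add_distrib, ← mul_add]
        exact Finset.sum_congr rfl fun i _ => Finset.sum_congr rfl fun j _ => by
          rw [hT3 i j]
      rw [e2, sum_ij_swap (a := A y)]
      congr 1
      exact Finset.sum_congr rfl fun r _ => by rw [sum_ij_swap (a := A y)]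
    rw [e1]
    rw [show Finset.Icc 0 (k - 2) = insert 0 (insert 1 (Finset.Icc 2 (k - 2))) from by
        ext t; simp; omega,
      Finset.sum_insert (by simp), Finset.sum_insert (by simp)]
    have e0 : (∑ w : Fin 0 → Fin n, ∑ p, ∑ q, (A y p q * χ (List.ofFn w) y)
        * pdI (ψ (k - (0 + 2))) (List.ofFn w ++ [p, q]) x)
        = ∑ i, ∑ j, A y i j * pdI (ψ (k - 2)) [i, j] x := by
      rw [Fintype.sum_subsingleton _ (fun t : Fin 0 => t.elim0)]
      refine Finset.sum_congr rfl fun p _ => Finset.sum_congr rfl fun q _ => ?_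
      rw [show List.ofFn (fun t : Fin 0 => t.elim0) = ([] : List (Fin n)) from by simp]
      rw [hχnil y]
      show A y p q * 1 * pdI (ψ (k - (0 + 2))) [p, q] x = _
      rw [mul_one]
    have e1' : (∑ w : Fin 1 → Fin n, ∑ p, ∑ q, (A y p q * χ (List.ofFn w) y)
        * pdI (ψ (k - (1 + 2))) (List.ofFn w ++ [p, q]) x) = 0 := by
      refine Finset.sum_eq_zero fun w _ => Finset.sum_eq_zero fun p _ =>
        Finset.sum_eq_zero fun q _ => ?_
      rw [show List.ofFn w = [w 0] from by simp [List.ofFn_succ], hχone (w 0) y]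
      ring
    rw [e0, e1']
    have e3 : (∑ r ∈ Finset.Icc 2 (k - 2), ∑ w : Fin r → Fin n, ∑ p, ∑ q,
        (A y p q * χ (List.ofFn w) y)
          * pdI (ψ (k - (r + 2))) (List.ofFn w ++ [p, q]) x)
        = ∑ r ∈ Finset.Icc 2 (k - 2), ∑ v : Fin r → Fin n, ∑ i, ∑ j,
            A y i j * (χ (List.ofFn v) y
              * pdI (ψ (k - 2 - r)) (List.ofFn v ++ [i, j]) x) := by
      refine Finset.sum_congr rfl fun r _ => ?_
      rw [show k - (r + 2) = k - 2 - r from by omega]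
      exact Finset.sum_congr rfl fun v _ =>
        Finset.sum_congr rfl fun p _ => Finset.sum_congr rfl fun q _ => by ring
    rw [e3]
    ring
  -- the recursion, summed against the slow derivatives
  have key : ∀ s ∈ Finset.Icc 0 (k - 2), ∀ (w : Fin s → Fin n) (p q : Fin n),
      (∑ i, ∑ j, A y i j * pd2 (χ (List.ofFn w ++ [p, q])) i j y)
        + 2 * (∑ j, A y q j * pd1 (χ (List.ofFn w ++ [p])) j y)
        + A y p q * χ (List.ofFn w) y = abar (List.ofFn w ++ [p, q]) := by
    intro s hs w p q
    simp only [Finset.mem_Icc] at hs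
    exact hrec (List.ofFn w) p q (by simp; omega) y
  -- the sum vanishes thanks to the equations for the ψ's
  have ePhi0 : (∑ r ∈ Finset.Icc 2 k, ∑ v : Fin r → Fin n,
      abar (List.ofFn v) * pdI (ψ (k - r)) (List.ofFn v) x) = 0 := by
    rw [show Finset.Icc 2 k = insert 2 (Finset.Icc 3 k) from by ext t; simp; omega,
      Finset.sum_insert (by simp)]
    have hS2 : (∑ v : Fin 2 → Fin n, abar (List.ofFn v) * pdI (ψ (k - 2)) (List.ofFn v) x)
        = ∑ p, ∑ q, abar [p, q] * pdI (ψ (k - 2)) [p, q] x := by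
      rw [← Equiv.sum_comp (piFinTwoEquiv (fun _ : Fin 2 => Fin n)).symm
        (fun v : Fin 2 → Fin n => abar (List.ofFn v) * pdI (ψ (k - 2)) (List.ofFn v) x),
        Fintype.sum_prod_type]
      refine Finset.sum_congr rfl fun p _ => Finset.sum_congr rfl fun q _ => ?_
      have hv : List.ofFn ((piFinTwoEquiv (fun _ : Fin 2 => Fin n)).symm (p, q)) = [p, q] := by
        simp [piFinTwoEquiv, List.ofFn_succ]
      rw [hv]
    have hpde := hψpde (k - 2) (by omega) (by omega) x hx
    rw [show k - 2 + 2 = k from by omega] at hpde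
    have hpde2 : (∑ p, ∑ q, abar [p, q] * pdI (ψ (k - 2)) [p, q] x)
        = - ∑ r ∈ Finset.Icc 3 k, ∑ v : Fin r → Fin n,
            abar (List.ofFn v) * pdI (ψ (k - r)) (List.ofFn v) x := by
      rw [← hpde]
      exact Finset.sum_congr rfl fun p _ => Finset.sum_congr rfl fun q _ => by
        rw [pd2_eq_pdI]
    rw [hS2, hpde2]
    ring
  -- final assembly
  rw [eA1, eA2, eA3]
  simp only [← Finset.sum_add_distrib]
  have hcomb : (∑ s ∈ Finset.Icc 0 (k - 2), ∑ w : Fin s → Fin n, ∑ p, ∑ q,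
      ((∑ i, ∑ j, A y i j * pd2 (χ (List.ofFn w ++ [p, q])) i j y)
          * pdI (ψ (k - (s + 2))) (List.ofFn w ++ [p, q]) x
        + (2 * ∑ j, A y q j * pd1 (χ (List.ofFn w ++ [p])) j y)
            * pdI (ψ (k - (s + 2))) (List.ofFn w ++ [p, q]) x
        + (A y p q * χ (List.ofFn w) y)
            * pdI (ψ (k - (s + 2))) (List.ofFn w ++ [p, q]) x))
      = ∑ s ∈ Finset.Icc 0 (k - 2), ∑ w : Fin s → Fin n, ∑ p, ∑ q,
          abar (List.ofFn w ++ [p, q])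
            * pdI (ψ (k - (s + 2))) (List.ofFn w ++ [p, q]) x := by
    refine Finset.sum_congr rfl fun s hs => Finset.sum_congr rfl fun w _ =>
      Finset.sum_congr rfl fun p _ => Finset.sum_congr rfl fun q _ => ?_
    rw [← add_mul, ← add_mul, key s hs w p q]
  rw [hcomb, ← hreidx (fun L r => abar L * pdI (ψ (k - r)) L x)]
  exact ePhi0
end
end

section
/- Ellipticity and concavity of the effective operator. Assume F satisfies (F1)–(F4). Then: (i) F̄ is uniformly elliptic with the same constants as F, i.e. for all M, N ∈ S^n with N positive semidefinite and all x ∈ Ω̄, λ‖N‖ ≤ F̄(M+N,x) − F̄(M,x) ≤ Λ‖N‖; (ii) for each x ∈ Ω̄ the map M ↦ F̄(M,x) is concave on S^n. -/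
open scoped Matrix.Norms.L2Operator
open Set

noncomputable section

/-- `n × n` real matrices, carrying the `ℓ² → ℓ²` operator norm. -/
abbrev Mat (n : ℕ) := Matrix (Fin n) (Fin n) ℝ

/-- The Hessian matrix `D²u(y)`. -/
def hess {n : ℕ} (u : En n → ℝ) (y : En n) : Mat n :=
  Matrix.of fun i j => pd2 u i j y

/-- (F1) `ℤⁿ`-periodicity of `F` in the fast variable. -/
def FPeriodic {n : ℕ} (Ω : Set (En n)) (F : Mat n → En n → En n → ℝ) : Prop :=
  ∀ (M : Mat n), ∀ x ∈ closure Ω, ∀ (y : En n) (k : Fin n → ℤ),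
    F M x (latticeShift y k) = F M x y

/-- (F2) uniform ellipticity of `F` with constants `λ ≤ Λ`. -/
def FElliptic {n : ℕ} (Ω : Set (En n)) (lam Lam : ℝ) (F : Mat n → En n → En n → ℝ) : Prop :=
  ∀ (M N : Mat n), ∀ x ∈ closure Ω, ∀ y : En n, N.PosSemidef →
    lam * ‖N‖ ≤ F (M + N) x y - F M x y ∧ F (M + N) x y - F M x y ≤ Lam * ‖N‖

/-- (F4) concavity of `F` in the matrix variable. -/
def FConcave {n : ℕ} (Ω : Set (En n)) (F : Mat n → En n → En n → ℝ) : Prop :=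
  ∀ x ∈ closure Ω, ∀ y : En n, ConcaveOn ℝ Set.univ (fun M : Mat n => F M x y)

/-- Admissibility of the modulus `τ` in (F3): nondecreasing, `≥ 1`, and
`τ_{‖M‖} ≤ σ (1 + ‖M‖)`. -/
def TauAdmissible (σ : ℝ) (τ : ℝ → ℝ) : Prop :=
  (∀ s t : ℝ, 0 < s → s ≤ t → τ s ≤ τ t) ∧ (∀ L : ℝ, 0 < L → 1 ≤ τ L) ∧
    ∀ r : ℝ, 0 ≤ r → τ r ≤ σ * (1 + r)

/-- (F3), Lipschitz form: for every `L > 0`, `F` is bounded by `τ L` and `τ L`-Lipschitz on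
`B̄_L × Ω̄ × ℝⁿ`. -/
def FLipschitz {n : ℕ} (Ω : Set (En n)) (τ : ℝ → ℝ) (F : Mat n → En n → En n → ℝ) : Prop :=
  ∀ L : ℝ, 0 < L →
    (∀ (M : Mat n), ∀ x ∈ closure Ω, ∀ y : En n, ‖M‖ ≤ L → |F M x y| ≤ τ L) ∧
    ∀ (M M' : Mat n) (x x' y y' : En n), ‖M‖ ≤ L → ‖M'‖ ≤ L →
      x ∈ closure Ω → x' ∈ closure Ω →
      |F M x y - F M' x' y'| ≤ τ L * (‖M - M'‖ + ‖x - x'‖ + ‖y - y'‖)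

/-- `w` is a bounded `ℤⁿ`-periodic `C²` solution of the cell problem
`F(D²_y w + M, x, y) = γ` in `ℝⁿ`. -/
def NLCellSol {n : ℕ} (F : Mat n → En n → En n → ℝ) (M : Mat n) (x : En n)
    (γ : ℝ) (w : En n → ℝ) : Prop :=
  IsBoundedFn w ∧ ZPeriodic w ∧ ContDiff ℝ 2 w ∧
    ∀ y : En n, F (hess w y + M) x y = γ

/-- `w` is a bounded `ℤⁿ`-periodic `C²` solution of the penalized cell problem
`F(D²_y w + M, x, y) - δ w = 0` in `ℝⁿ`. -/
def NLPenSol {n : ℕ} (F : Mat n → En n → En n → ℝ) (M : Mat n) (x : En n)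
    (δ : ℝ) (w : En n → ℝ) : Prop :=
  IsBoundedFn w ∧ ZPeriodic w ∧ ContDiff ℝ 2 w ∧
    ∀ y : En n, F (hess w y + M) x y - δ * w y = 0


section Aux

variable {n : ℕ}

/-- A continuous `ℤⁿ`-periodic function attains a global minimum. -/
lemma zper_exists_min {w : En n → ℝ} (hc : Continuous w) (hp : ZPeriodic w) :
    ∃ y₀ : En n, ∀ y, w y₀ ≤ w y := by
  classical
  set K : Set (En n) :=
    (WithLp.equiv 2 (Fin n → ℝ)).symm '' (Set.univ.pi fun _ : Fin n => Icc (0:ℝ) 1) with hKdef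
  have hK : IsCompact K :=
    (isCompact_univ_pi fun _ => isCompact_Icc).image (PiLp.continuous_toLp _ _)
  have hne : K.Nonempty :=
    ⟨_, ⟨fun _ => (0:ℝ), fun i _ => ⟨le_refl 0, zero_le_one⟩, rfl⟩⟩
  obtain ⟨y₀, _, hy₀⟩ := hK.exists_isMinOn hne hc.continuousOn
  refine ⟨y₀, fun y => ?_⟩
  have hz : latticeShift y (fun i => -⌊y i⌋) ∈ K := by
    refine ⟨fun i => Int.fract (y i), fun i _ => ⟨Int.fract_nonneg _, (Int.fract_lt_one _).le⟩, ?_⟩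
    ext i
    simp [latticeShift, Int.fract, sub_eq_add_neg]
  have h : w y₀ ≤ w (latticeShift y (fun i => -⌊y i⌋)) := hy₀ hz
  rwa [hp y] at h

/-- One-dimensional second derivative test at a global minimum. -/
lemma deriv2_nonneg_of_min {g g1 : ℝ → ℝ} (hg : ∀ t, HasDerivAt g (g1 t) t)
    {c : ℝ} (hg1 : HasDerivAt g1 c 0) (hmin : ∀ t, g 0 ≤ g t) : 0 ≤ c := by
  by_contra hc
  push_neg at hc
  have h0 : g1 0 = 0 := by
    have hloc : IsLocalMin g 0 := Filter.Eventually.of_forall hmin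
    have h := hloc.deriv_eq_zero
    rwa [(hg 0).deriv] at h
  have hs : ∀ᶠ t in nhdsWithin (0:ℝ) {(0:ℝ)}ᶜ, slope g1 0 t < 0 :=
    (hasDerivAt_iff_tendsto_slope.1 hg1).eventually (Iio_mem_nhds hc)
  rw [eventually_nhdsWithin_iff] at hs
  rcases Metric.eventually_nhds_iff.1 hs with ⟨ε, hε, hball⟩
  have hneg : ∀ s : ℝ, 0 < s → s < ε → g1 s < 0 := by
    intro s hs0 hsε
    have hd : dist s 0 < ε := by
      rw [Real.dist_eq, sub_zero, abs_of_pos hs0]; exact hsε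
    have hmem : s ∈ ({(0:ℝ)}ᶜ : Set ℝ) := by simpa using hs0.ne'
    have hsl := hball hd hmem
    rw [slope_def_field, h0, sub_zero, sub_zero] at hsl
    rcases div_neg_iff.1 hsl with ⟨_, h2⟩ | ⟨h1, _⟩
    · exact absurd h2 (not_lt.2 hs0.le)
    · exact h1
  set t : ℝ := ε / 2 with htdef
  have ht0 : (0:ℝ) < t := half_pos hε
  obtain ⟨ξ, hξ, hslope⟩ := exists_hasDerivAt_eq_slope g g1 ht0
    (fun s _ => (hg s).continuousAt.continuousWithinAt) (fun s _ => hg s)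
  have hξneg : g1 ξ < 0 := hneg ξ hξ.1 (lt_trans hξ.2 (half_lt_self hε))
  rw [hslope, sub_zero] at hξneg
  have h5 : g t - g 0 < 0 := by
    rcases div_neg_iff.1 hξneg with ⟨_, h2⟩ | ⟨h1, _⟩
    · exact absurd h2 (not_lt.2 ht0.le)
    · exact h1
  linarith [hmin t]

/-- The Hessian at a global minimum of a `C²` function is positive semidefinite. -/
lemma hess_psd_of_min {w : En n → ℝ} (hw : ContDiff ℝ 2 w) {y₀ : En n}
    (hmin : ∀ y, w y₀ ≤ w y) : (hess w y₀).PosSemidef := by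
  classical
  set B := fderiv ℝ (fderiv ℝ w) y₀ with hBdef
  have hsym : ∀ u v : En n, B u v = B v u := hw.contDiffAt.isSymmSndFDerivAt (by simp)
  have hpd2 : ∀ i j, pd2 w i j y₀
      = B (EuclideanSpace.single i 1) (EuclideanSpace.single j 1) := by
    intro i j
    rw [pd2, iteratedFDeriv_two_apply]
    simp [hBdef]
  have hdw : Differentiable ℝ w := hw.differentiable (by norm_num)
  have hBfd : HasFDerivAt (fderiv ℝ w) B y₀ :=
    (((hw.fderiv_right (m := 1) (by norm_num)).differentiable (by norm_num)) y₀).hasFDerivAt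
  have key : ∀ u : En n, 0 ≤ B u u := by
    intro u
    have hline : ∀ t : ℝ, HasDerivAt (fun t : ℝ => y₀ + t • u) u t := by
      intro t
      have h := ((hasDerivAt_id t).smul_const u).const_add y₀
      simpa using h
    have hg : ∀ t : ℝ, HasDerivAt (fun t : ℝ => w (y₀ + t • u))
        (fderiv ℝ w (y₀ + t • u) u) t := fun t =>
      (hdw (y₀ + t • u)).hasFDerivAt.comp_hasDerivAt t (hline t)
    have hg1 : HasDerivAt (fun t : ℝ => fderiv ℝ w (y₀ + t • u) u) (B u u) 0 := by
      have hBfd' : HasFDerivAt (fderiv ℝ w) B (y₀ + (0:ℝ) • u) := by simpa using hBfd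
      have h1 : HasDerivAt (fun t : ℝ => fderiv ℝ w (y₀ + t • u)) (B u) 0 :=
        hBfd'.comp_hasDerivAt 0 (hline 0)
      have h2 := h1.clm_apply (hasDerivAt_const 0 u)
      simpa using h2
    exact deriv2_nonneg_of_min hg hg1 (fun t => by simpa using hmin (y₀ + t • u))
  rw [Matrix.posSemidef_iff_dotProduct_mulVec]
  constructor
  · show (hess w y₀).conjTranspose = hess w y₀
    ext i j
    simp only [Matrix.conjTranspose_apply, hess, Matrix.of_apply, star_trivial]
    rw [hpd2, hpd2]
    exact hsym _ _
  · intro v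
    set u : En n := ∑ i, v i • (EuclideanSpace.single i (1:ℝ)) with hu
    have hBu : B u = ∑ i, v i • B (EuclideanSpace.single i 1) := by
      rw [hu, map_sum]
      exact Finset.sum_congr rfl fun i _ => by rw [map_smul]
    have hBiu : ∀ i, B (EuclideanSpace.single i (1:ℝ)) u
        = ∑ j, v j * B (EuclideanSpace.single i 1) (EuclideanSpace.single j 1) := by
      intro i
      rw [hu, map_sum]
      exact Finset.sum_congr rfl fun j _ => by rw [map_smul, smul_eq_mul]
    have hexp : dotProduct (star v) (Matrix.mulVec (hess w y₀) v) = B u u := by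
      rw [hBu]
      simp only [ContinuousLinearMap.coe_sum', ContinuousLinearMap.coe_smul',
        Finset.sum_apply, Pi.smul_apply, smul_eq_mul, hBiu]
      simp only [dotProduct, Matrix.mulVec, hess, Matrix.of_apply, star_trivial, hpd2]
      refine Finset.sum_congr rfl fun i _ => ?_
      rw [Finset.mul_sum, Finset.mul_sum]
      exact Finset.sum_congr rfl fun j _ => by ring
    rw [hexp]
    exact key u

/-- Hessians combine linearly. -/
lemma hess_comb {w1 w2 : En n → ℝ} (h1 : ContDiff ℝ 2 w1) (h2 : ContDiff ℝ 2 w2)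
    (a b : ℝ) (y : En n) :
    hess (fun z => a * w1 z + b * w2 z) y = a • hess w1 y + b • hess w2 y := by
  ext i j
  simp only [hess, Matrix.of_apply, Matrix.add_apply, Matrix.smul_apply, pd2, smul_eq_mul]
  have hfun : (fun z => a * w1 z + b * w2 z) = (fun z => a • w1 z + b • w2 z) := rfl
  rw [hfun, iteratedFDeriv_add_apply' (ContDiff.const_smul a h1).contDiffAt (ContDiff.const_smul b h2).contDiffAt,
    iteratedFDeriv_const_smul_apply' h1.contDiffAt, iteratedFDeriv_const_smul_apply' h2.contDiffAt]
  rfl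

lemma hess_sub {w1 w2 : En n → ℝ} (h1 : ContDiff ℝ 2 w1) (h2 : ContDiff ℝ 2 w2) (y : En n) :
    hess (fun z => w1 z - w2 z) y = hess w1 y - hess w2 y := by
  have e : (fun z => w1 z - w2 z) = (fun z => 1 * w1 z + (-1) * w2 z) := by
    funext z; ring
  rw [e, hess_comb h1 h2 1 (-1) y]
  simp [sub_eq_add_neg]

/-- At a global min of the difference of two periodic `C²` functions,
the difference of Hessians is PSD. -/
lemma exists_min_hess_psd {u v : En n → ℝ} (hu : ContDiff ℝ 2 u) (hv : ContDiff ℝ 2 v)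
    (hup : ZPeriodic u) (hvp : ZPeriodic v) :
    ∃ y₀ : En n, (hess u y₀ - hess v y₀).PosSemidef := by
  have hper : ZPeriodic (fun y => u y - v y) := by
    intro y k
    simp only
    rw [hup y k, hvp y k]
  obtain ⟨y₀, hy₀⟩ := zper_exists_min (hu.continuous.sub hv.continuous) hper
  refine ⟨y₀, ?_⟩
  have h := hess_psd_of_min (hu.sub hv) hy₀
  rwa [hess_sub hu hv] at h

end Aux

/-- **Ellipticity and concavity of the effective operator.** `F̄` is uniformly elliptic with
the same constants `λ, Λ` as `F`, and `M ↦ F̄(M,x)` is concave for each `x ∈ Ω̄`. -/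
theorem effective_operator_elliptic_concave
    (n : ℕ) (hn : 1 ≤ n) (lam Lam σ : ℝ)
    (hlam : 0 < lam) (hlamLam : lam ≤ Lam) (hσ : 0 < σ)
    (Ω : Set (En n)) (hΩo : IsOpen Ω) (hΩconn : IsConnected Ω)
    (hΩb : Bornology.IsBounded Ω)
    (F : Mat n → En n → En n → ℝ) (τ : ℝ → ℝ) (hτ : TauAdmissible σ τ)
    (hFper : FPeriodic Ω F) (hFell : FElliptic Ω lam Lam F)
    (hFlip : FLipschitz Ω τ F) (hFcon : FConcave Ω F)
    (Fbar : Mat n → En n → ℝ)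
    (hFbar : ∀ (M : Mat n), ∀ x ∈ closure Ω, ∃ w : En n → ℝ, NLCellSol F M x (Fbar M x) w)
    :
    (∀ (M N : Mat n), ∀ x ∈ closure Ω, N.PosSemidef →
      lam * ‖N‖ ≤ Fbar (M + N) x - Fbar M x ∧ Fbar (M + N) x - Fbar M x ≤ Lam * ‖N‖) ∧
    ∀ x ∈ closure Ω, ConcaveOn ℝ Set.univ (fun M : Mat n => Fbar M x) := by
  constructor
  · intro M N x hx hN
    obtain ⟨w1, b1, p1, c1, e1⟩ := hFbar (M + N) x hx
    obtain ⟨w2, b2, p2, c2, e2⟩ := hFbar M x hx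
    constructor
    · -- lower bound, via a min of w1 - w2
      obtain ⟨y₀, hH⟩ := exists_min_hess_psd c1 c2 p1 p2
      set H := hess w1 y₀ - hess w2 y₀ with hHdef
      have key1 := e1 y₀
      have hw1e : hess w1 y₀ + (M + N) = hess w2 y₀ + M + H + N := by
        rw [hHdef]; abel
      rw [hw1e] at key1
      have key2 := e2 y₀
      have h1 := (hFell (hess w2 y₀ + M + H) N x hx y₀ hN).1
      have h2 := (hFell (hess w2 y₀ + M) H x hx y₀ hH).1
      have hH0 : 0 ≤ lam * ‖H‖ := mul_nonneg hlam.le (norm_nonneg _)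
      linarith
    · -- upper bound, via a min of w2 - w1
      obtain ⟨y₀, hH⟩ := exists_min_hess_psd c2 c1 p2 p1
      set H := hess w2 y₀ - hess w1 y₀ with hHdef
      have key1 := e1 y₀
      have hw1e : hess w1 y₀ + (M + N) = hess w1 y₀ + M + N := by abel
      rw [hw1e] at key1
      have key2 := e2 y₀
      have hw2e : hess w2 y₀ + M = hess w1 y₀ + M + H := by
        rw [hHdef]; abel
      rw [hw2e] at key2
      have h1 := (hFell (hess w1 y₀ + M) N x hx y₀ hN).2
      have h2 := (hFell (hess w1 y₀ + M) H x hx y₀ hH).1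
      have hH0 : 0 ≤ lam * ‖H‖ := mul_nonneg hlam.le (norm_nonneg _)
      linarith
  · intro x hx
    refine ⟨convex_univ, ?_⟩
    intro M1 _ M2 _ a b ha hb hab
    obtain ⟨w1, b1, p1, c1, e1⟩ := hFbar M1 x hx
    obtain ⟨w2, b2, p2, c2, e2⟩ := hFbar M2 x hx
    obtain ⟨w3, b3, p3, c3, e3⟩ := hFbar (a • M1 + b • M2) x hx
    have cz : ContDiff ℝ 2 (fun y => a * w1 y + b * w2 y) :=
      (contDiff_const.mul c1).add (contDiff_const.mul c2)
    have zp : ZPeriodic (fun y => a * w1 y + b * w2 y) := by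
      intro y k
      simp only
      rw [p1 y k, p2 y k]
    obtain ⟨y₀, hH⟩ := exists_min_hess_psd c3 cz p3 zp
    have hzh : hess (fun y => a * w1 y + b * w2 y) y₀
        = a • hess w1 y₀ + b • hess w2 y₀ := hess_comb c1 c2 a b y₀
    have key3 := e3 y₀
    have eq3 : hess w3 y₀ + (a • M1 + b • M2)
        = a • (hess w1 y₀ + M1) + b • (hess w2 y₀ + M2)
          + (hess w3 y₀ - hess (fun y => a * w1 y + b * w2 y) y₀) := by
      rw [hzh, smul_add, smul_add]; abel
    rw [eq3] at key3
    have h1 := (hFell (a • (hess w1 y₀ + M1) + b • (hess w2 y₀ + M2))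
      (hess w3 y₀ - hess (fun y => a * w1 y + b * w2 y) y₀) x hx y₀ hH).1
    have hcon := (hFcon x hx y₀).2 (Set.mem_univ (hess w1 y₀ + M1))
      (Set.mem_univ (hess w2 y₀ + M2)) ha hb hab
    have k1 := e1 y₀
    have k2 := e2 y₀

    have hH0 : 0 ≤ lam * ‖hess w3 y₀ - hess (fun y => a * w1 y + b * w2 y) y₀‖ :=
      mul_nonneg hlam.le (norm_nonneg _)
    simp only [smul_eq_mul] at hcon ⊢
    rw [k1, k2] at hcon
    linarith
end
end
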